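/- arXiv:1111.1390 — 13 statements merged into one kernel-verified Lean document; each statement's English description precedes it below -/
import Mathlib

section
/- Let ≼ be a partial order on a nonempty set X with asymmetric part P_≼, and let S be an equivalence relation on X satisfying P_≼ ∘ S = S ∘ P_≼ = P_≼. Then there exists a total preorder S-extension of ≼, i.e., a total preorder ≾ on X with P_≼ ⊆ P_≾ and S_≾ = S. -/
variable {X : Type*}

/-- `G` is a preorder: reflexive and transitive. -/
def IsPreorderRel (G : Set (X × X)) : Prop :=
  (∀ x, (x, x) ∈ G) ∧ ∀ x y z, (x, y) ∈ G → (y, z) ∈ G → (x, z) ∈ G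

/-- `G` is a partial order: an antisymmetric preorder. -/
def IsPartialOrderRel (G : Set (X × X)) : Prop :=
  IsPreorderRel G ∧ ∀ x y, (x, y) ∈ G → (y, x) ∈ G → x = y

/-- `G` is total. -/
def IsTotalRel (G : Set (X × X)) : Prop :=
  ∀ x y, (x, y) ∈ G ∨ (y, x) ∈ G

/-- `S` is an equivalence relation (as a set of pairs). -/
def IsEquivRel (S : Set (X × X)) : Prop :=
  (∀ x, (x, x) ∈ S) ∧ (∀ x y, (x, y) ∈ S → (y, x) ∈ S) ∧
    ∀ x y z, (x, y) ∈ S → (y, z) ∈ S → (x, z) ∈ S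

/-- The asymmetric part `P_G` of `G`. -/
def asymPart (G : Set (X × X)) : Set (X × X) :=
  {p | p ∈ G ∧ (p.2, p.1) ∉ G}

/-- The symmetric part `S_G` of `G`. -/
def symPart (G : Set (X × X)) : Set (X × X) :=
  {p | p ∈ G ∧ (p.2, p.1) ∈ G}

/-- Composition of relations: `(x, y) ∈ A ∘ B ↔ ∃ z, (x, z) ∈ A ∧ (z, y) ∈ B`. -/
def relComp (A B : Set (X × X)) : Set (X × X) :=
  {p | ∃ z, (p.1, z) ∈ A ∧ (z, p.2) ∈ B}

/-- The indifference relation `I_G`. -/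
def indiff (G : Set (X × X)) : Set (X × X) :=
  {p | p ∉ asymPart G ∧ (p.2, p.1) ∉ asymPart G}

/-- The equipotency relation `R_G`. -/
def equipot (G : Set (X × X)) : Set (X × X) :=
  {p | {z | (p.1, z) ∈ indiff G} = {z | (p.2, z) ∈ indiff G}}

/-- `T` is a total preorder `S`-extension of the partial order `pr`. -/
def IsSExtension (pr S T : Set (X × X)) : Prop :=
  IsPreorderRel T ∧ IsTotalRel T ∧ asymPart pr ⊆ asymPart T ∧ symPart T = S

/-- `G` is acyclic: for any chain `x 0, …, x n` of `G`-related consecutive points,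
`(x n, x 0) ∉ G`. -/
def IsAcyclicRel (G : Set (X × X)) : Prop :=
  ∀ (n : ℕ) (x : Fin (n + 1) → X),
    (∀ i : Fin n, (x i.castSucc, x i.succ) ∈ G) → (x (Fin.last n), x 0) ∉ G

/-- The transitive hull of `G`: the smallest transitive relation containing `G`. -/
def TransHull (G : Set (X × X)) : Set (X × X) :=
  {p | Relation.TransGen (fun a b => (a, b) ∈ G) p.1 p.2}

/-- `G` is negatively transitive: the complement of `G` is transitive. -/
def IsNegTransRel (G : Set (X × X)) : Prop :=
  ∀ x y z, (x, y) ∉ G → (y, z) ∉ G → (x, z) ∉ G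

/-- `Σ(≼)`: equivalence relations `S` with `S ∘ P_≼ ∘ S` irreflexive. -/
def SigmaCol (pr : Set (X × X)) : Set (Set (X × X)) :=
  {S | IsEquivRel S ∧ ∀ x, (x, x) ∉ relComp S (relComp (asymPart pr) S)}

/-- `Σ*(≼)`: equivalence relations `S` with `S ∘ P_≼ ∘ S` acyclic. -/
def SigmaStar (pr : Set (X × X)) : Set (Set (X × X)) :=
  {S | IsEquivRel S ∧ IsAcyclicRel (relComp S (relComp (asymPart pr) S))}

theorem exists_total_preorder_S_extension [Nonempty X] (pr S : Set (X × X))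
    (hpr : IsPartialOrderRel pr) (hS : IsEquivRel S)
    (h1 : relComp (asymPart pr) S = asymPart pr)
    (h2 : relComp S (asymPart pr) = asymPart pr) :
    ∃ T : Set (X × X), IsSExtension pr S T := by
  classical
  obtain ⟨⟨hrefl, htrans⟩, hanti⟩ := hpr
  obtain ⟨hSr, hSs, hSt⟩ := hS
  have hPtrans : ∀ x y z, (x,y) ∈ asymPart pr → (y,z) ∈ asymPart pr → (x,z) ∈ asymPart pr := by
    rintro x y z ⟨hxy, hyx⟩ ⟨hyz, hzy⟩
    exact ⟨htrans _ _ _ hxy hyz, fun hzx => hzy (htrans _ _ _ hzx hxy)⟩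
  have hPS : ∀ x y z, (x,y) ∈ asymPart pr → (y,z) ∈ S → (x,z) ∈ asymPart pr := by
    intro x y z hp hs
    have : (x,z) ∈ relComp (asymPart pr) S := ⟨y, hp, hs⟩
    rwa [h1] at this
  have hSP : ∀ x y z, (x,y) ∈ S → (y,z) ∈ asymPart pr → (x,z) ∈ asymPart pr := by
    intro x y z hs hp
    have : (x,z) ∈ relComp S (asymPart pr) := ⟨y, hs, hp⟩
    rwa [h2] at this
  let st : Setoid X := ⟨fun a b => (a,b) ∈ S,
    ⟨fun a => hSr a, fun h => hSs _ _ h, fun h h' => hSt _ _ _ h h'⟩⟩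
  let r : Quotient st → Quotient st → Prop := fun a b =>
    a = b ∨ ∃ x y, Quotient.mk st x = a ∧ Quotient.mk st y = b ∧ (x,y) ∈ asymPart pr
  have hne : ∀ x y : X, (x,y) ∈ asymPart pr → Quotient.mk st x ≠ Quotient.mk st y := by
    intro x y hp he
    have hs : (x,y) ∈ S := Quotient.exact he
    have : (x,x) ∈ asymPart pr := hPS _ _ _ hp (hSs _ _ hs)
    exact this.2 this.1
  haveI hrPO : IsPartialOrder (Quotient st) r := by
    refine { refl := fun a => Or.inl rfl, trans := ?_, antisymm := ?_ }
    · rintro a b c (rfl | ⟨x, y, rfl, rfl, hp⟩) h2'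
      · exact h2'
      · rcases h2' with rfl | ⟨y', z, hy', rfl, hp'⟩
        · exact Or.inr ⟨x, y, rfl, rfl, hp⟩
        · have hs : (y', y) ∈ S := Quotient.exact hy'
          have : (x, z) ∈ asymPart pr := hPtrans _ _ _ (hPS _ _ _ hp (hSs _ _ hs)) hp'
          exact Or.inr ⟨x, z, rfl, rfl, this⟩
    · rintro a b (rfl | ⟨x, y, rfl, rfl, hp⟩) h2'
      · rfl
      · rcases h2' with he | ⟨y', x', hy', hx', hp'⟩
        · exact he.symm
        · exfalso
          have hsy : (y, y') ∈ S := Quotient.exact hy'.symm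
          have hsx : (x', x) ∈ S := Quotient.exact hx'
          have h3 : (y, x) ∈ asymPart pr := hPS _ _ _ (hSP _ _ _ hsy hp') hsx
          have := hPtrans _ _ _ hp h3
          exact this.2 this.1
  obtain ⟨s, hsl, hrs⟩ := extend_partialOrder r
  haveI := hsl
  refine ⟨{p | s (Quotient.mk st p.1) (Quotient.mk st p.2)}, ⟨fun x => refl_of s _,
    fun x y z hxy hyz => trans_of s hxy hyz⟩, fun x y => total_of s _ _, ?_, ?_⟩
  · intro ⟨x, y⟩ hp
    have hsxy : s (Quotient.mk st x) (Quotient.mk st y) :=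
      hrs _ _ (Or.inr ⟨x, y, rfl, rfl, hp⟩)
    refine ⟨hsxy, fun hyx => hne _ _ hp (antisymm_of s hsxy hyx)⟩
  · ext ⟨x, y⟩
    constructor
    · rintro ⟨hxy, hyx⟩
      exact Quotient.exact (antisymm_of s hxy hyx)
    · intro hs
      have he : Quotient.mk st x = Quotient.mk st y := Quotient.sound hs
      exact ⟨show s _ _ by rw [he]; exact refl_of s _, show s _ _ by rw [he]; exact refl_of s _⟩
end

section
/- Let ≼ be a partial order on a nonempty set X with asymmetric part P_≼, and let S be an equivalence relation on X satisfying P_≼ ∘ S = S ∘ P_≼ = P_≼. Then for any pair of points a,b ∈ X with (a,b) ∉ ≼ ∪ S and (b,a) ∉ ≼ ∪ S, there exists a total preorder ≾ on X which is a total preorder S-extension of ≼ and satisfies (a,b) ∈ ≾. -/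
variable {X : Type*}

theorem exists_total_preorder_S_extension_pair [Nonempty X] (pr S : Set (X × X))
    (hpr : IsPartialOrderRel pr) (hS : IsEquivRel S)
    (h1 : relComp (asymPart pr) S = asymPart pr)
    (h2 : relComp S (asymPart pr) = asymPart pr)
    (a b : X) (hab : (a, b) ∉ pr ∪ S) (hba : (b, a) ∉ pr ∪ S) :
    ∃ T : Set (X × X), IsSExtension pr S T ∧ (a, b) ∈ T := by
  classical
  obtain ⟨⟨hrefl, htrans⟩, hanti⟩ := hpr
  obtain ⟨hSr, hSs, hSt⟩ := hS
  -- saturation of P = asymPart pr under S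
  have sat1 : ∀ x y y', (x, y) ∈ asymPart pr → (y, y') ∈ S → (x, y') ∈ asymPart pr := by
    intro x y y' hp hs
    have : (x, y') ∈ relComp (asymPart pr) S := ⟨y, hp, hs⟩
    rwa [h1] at this
  have sat2 : ∀ x x' y, (x, x') ∈ S → (x', y) ∈ asymPart pr → (x, y) ∈ asymPart pr := by
    intro x x' y hs hp
    have : (x, y) ∈ relComp S (asymPart pr) := ⟨x', hs, hp⟩
    rwa [h2] at this
  set st : Setoid X := ⟨fun x y => (x, y) ∈ S, ⟨fun x => hSr x, fun h => hSs _ _ h,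
    fun h h' => hSt _ _ _ h h'⟩⟩ with hst
  let Q := Quotient st
  -- induced strict order on quotient
  let P' : Q → Q → Prop := Quotient.lift₂ (fun x y => (x, y) ∈ asymPart pr) (by
    intro x y x' y' hx hy
    have hx' : (x, x') ∈ S := hx
    have hy' : (y, y') ∈ S := hy
    apply propext
    constructor
    · intro h; exact sat2 _ _ _ (hSs _ _ hx') (sat1 _ _ _ h hy')
    · intro h; exact sat2 _ _ _ hx' (sat1 _ _ _ h (hSs _ _ hy')))
  have P'mk : ∀ x y : X, P' ⟦x⟧ ⟦y⟧ ↔ (x, y) ∈ asymPart pr := fun x y => Iff.rfl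
  have P'irr : ∀ q : Q, ¬ P' q q := by
    intro q
    induction q using Quotient.ind with
    | _ x => exact fun h => h.2 h.1
  have P'trans : ∀ q r s : Q, P' q r → P' r s → P' q s := by
    intro q r s
    induction q using Quotient.ind with
    | _ x =>
    induction r using Quotient.ind with
    | _ y =>
    induction s using Quotient.ind with
    | _ z =>
    intro h h'
    refine ⟨htrans _ _ _ h.1 h'.1, fun hzx => h'.2 (htrans _ _ _ hzx h.1)⟩
  have hnab : ¬ P' ⟦a⟧ ⟦b⟧ := fun h => hab (Or.inl h.1)
  have hnba : ¬ P' ⟦b⟧ ⟦a⟧ := fun h => hba (Or.inl h.1)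
  have hane : (⟦a⟧ : Q) ≠ ⟦b⟧ := fun h => hab (Or.inr (Quotient.exact h))
  -- partial order extending P' with (a,b)
  let R : Q → Q → Prop := fun q r => q = r ∨ P' q r ∨
    ((q = ⟦a⟧ ∨ P' q ⟦a⟧) ∧ (r = ⟦b⟧ ∨ P' ⟦b⟧ r))
  -- helper: combine weak chains
  have le' : ∀ q r s : Q, (q = r ∨ P' q r) → (r = s ∨ P' r s) → (q = s ∨ P' q s) := by
    rintro q r s (rfl | h) (rfl | h')
    · exact Or.inl rfl
    · exact Or.inr h'
    · exact Or.inr h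
    · exact Or.inr (P'trans _ _ _ h h')
  have trb : ∀ q r : Q, (q = ⟦b⟧ ∨ P' ⟦b⟧ q) → P' q r → (r = ⟦b⟧ ∨ P' ⟦b⟧ r) := by
    rintro q r (rfl | h) h'
    · exact Or.inr h'
    · exact Or.inr (P'trans _ _ _ h h')
  have nba' : ∀ q : Q, (q = ⟦b⟧ ∨ P' ⟦b⟧ q) → (q = ⟦a⟧ ∨ P' q ⟦a⟧) → False := by
    rintro q (rfl | h) (h' | h')
    · exact hane h'.symm
    · exact hnba h'
    · exact hnba (h' ▸ h)
    · exact hnba (P'trans _ _ _ h h')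
  have Rrefl : ∀ q : Q, R q q := fun q => Or.inl rfl
  have Rtrans : ∀ q r s : Q, R q r → R r s → R q s := by
    rintro q r s (rfl | h | ⟨h1', h2'⟩) hr
    · exact hr
    · rcases hr with rfl | h' | ⟨h1', h2'⟩
      · exact Or.inr (Or.inl h)
      · exact Or.inr (Or.inl (P'trans _ _ _ h h'))
      · exact Or.inr (Or.inr ⟨le' _ _ _ (Or.inr h) h1', h2'⟩)
    · rcases hr with rfl | h' | ⟨h1'', h2''⟩
      · exact Or.inr (Or.inr ⟨h1', h2'⟩)
      · exact Or.inr (Or.inr ⟨h1', trb _ _ h2' h'⟩)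
      · exact absurd h1'' (fun hh => nba' _ h2' hh)
  have Ranti : ∀ q r : Q, R q r → R r q → q = r := by
    rintro q r (rfl | h | ⟨h1', h2'⟩) hr
    · rfl
    · rcases hr with rfl | h' | ⟨h1'', h2''⟩
      · rfl
      · exact absurd (P'trans _ _ _ h h') (P'irr q)
      · exact absurd h1'' (fun hh => nba' _ (trb _ _ h2'' h) hh)
    · rcases hr with rfl | h' | ⟨h1'', h2''⟩
      · exact absurd h1' (fun hh => nba' _ h2' hh)
      · exact absurd h1' (fun hh => nba' _ (trb _ _ h2' h') hh)
      · exact absurd h1'' (fun hh => nba' _ h2' hh)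
  letI : IsPartialOrder Q R :=
    { refl := Rrefl
      trans := Rtrans
      antisymm := Ranti }
  obtain ⟨L, hL, hRL⟩ := extend_partialOrder R
  refine ⟨{p | L ⟦p.1⟧ ⟦p.2⟧}, ⟨⟨fun x => hL.refl _, fun x y z hxy hyz => hL.trans _ _ _ hxy hyz⟩,
    fun x y => hL.total _ _, ?_, ?_⟩, ?_⟩
  · -- asymPart pr ⊆ asymPart T
    intro ⟨x, y⟩ hp
    have hL1 : L ⟦x⟧ ⟦y⟧ := hRL _ _ (Or.inr (Or.inl hp))
    refine ⟨hL1, fun hL2 => ?_⟩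
    have : (⟦y⟧ : Q) = ⟦x⟧ := hL.antisymm _ _ hL2 hL1
    have hs : (y, x) ∈ S := Quotient.exact this
    exact (sat1 _ _ _ hp hs).2 (hrefl x)
  · -- symPart T = S
    ext ⟨x, y⟩
    constructor
    · intro ⟨hxy, hyx⟩
      exact Quotient.exact (hL.antisymm (⟦x⟧ : Q) ⟦y⟧ hxy hyx)
    · intro hs
      have he : (⟦x⟧ : Q) = ⟦y⟧ := Quotient.sound hs
      constructor
      · show L ⟦x⟧ ⟦y⟧; rw [he]; exact hL.refl _
      · show L ⟦y⟧ ⟦x⟧; rw [he]; exact hL.refl _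
  · exact hRL _ _ (Or.inr (Or.inr ⟨Or.inl rfl, Or.inl rfl⟩))
end

section
/- Let ≼ be a partial order on a nonempty set X with asymmetric part P_≼, and let S be an equivalence relation on X satisfying P_≼ ∘ S = S ∘ P_≼ = P_≼. Then the intersection of all total preorder S-extensions of ≼ equals the preorder ≼ ∪ S. -/
variable {X : Type*}

theorem sInter_S_extensions_eq_union [Nonempty X] (pr S : Set (X × X))
    (hpr : IsPartialOrderRel pr) (hS : IsEquivRel S)
    (h1 : relComp (asymPart pr) S = asymPart pr)
    (h2 : relComp S (asymPart pr) = asymPart pr) :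
    ⋂₀ {T : Set (X × X) | IsSExtension pr S T} = pr ∪ S := by
  obtain ⟨⟨prRefl, prTrans⟩, prAnti⟩ := hpr
  obtain ⟨sRefl, sSymm, sTrans⟩ := hS
  set P := asymPart pr with hPdef
  have Pirr : ∀ x, (x, x) ∉ P := fun x hx => hx.2 hx.1
  have PS : ∀ {x y z : X}, (x, y) ∈ P → (y, z) ∈ S → (x, z) ∈ P := by
    intro x y z hxy hyz
    have : (x, z) ∈ relComp P S := ⟨y, hxy, hyz⟩
    rwa [hPdef, h1] at this
  have SP : ∀ {x y z : X}, (x, y) ∈ S → (y, z) ∈ P → (x, z) ∈ P := by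
    intro x y z hxy hyz
    have : (x, z) ∈ relComp S P := ⟨y, hxy, hyz⟩
    rwa [hPdef, h2] at this
  have PP : ∀ {x y z : X}, (x, y) ∈ P → (y, z) ∈ P → (x, z) ∈ P := by
    intro x y z hxy hyz
    exact ⟨prTrans _ _ _ hxy.1 hyz.1, fun hzx => hxy.2 (prTrans _ _ _ hyz.1 hzx)⟩
  -- the preorder q = S ∪ P
  set q : Set (X × X) := S ∪ P with hqdef
  have qTrans : ∀ {x y z : X}, (x, y) ∈ q → (y, z) ∈ q → (x, z) ∈ q := by
    rintro x y z (h | h) (h' | h')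
    · exact Or.inl (sTrans _ _ _ h h')
    · exact Or.inr (SP h h')
    · exact Or.inr (PS h h')
    · exact Or.inr (PP h h')
  have qSym : ∀ {x y : X}, (x, y) ∈ q → (y, x) ∈ q → (x, y) ∈ S := by
    rintro x y (h | h) (h' | h')
    · exact h
    · exact absurd (PS h' h) (Pirr y)
    · exact absurd (PS h h') (Pirr x)
    · exact absurd (PP h h') (Pirr x)
  have Sq : S ⊆ q := Set.subset_union_left
  -- key step: for (a,b) ∉ pr ∪ S, there is an S-extension T with (a,b) ∉ T
  have key : ∀ a b : X, (a, b) ∉ pr → (a, b) ∉ S →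
      ∃ T, IsSExtension pr S T ∧ (a, b) ∉ T := by
    intro a b hab_pr hab_S
    have hab_q : (a, b) ∉ q := by
      rintro (h | h)
      · exact hab_S h
      · exact hab_pr h.1
    -- add the pair (b, a)
    set q1 : Set (X × X) := q ∪ {p | (p.1, b) ∈ q ∧ (a, p.2) ∈ q} with hq1def
    have qq1 : q ⊆ q1 := Set.subset_union_left
    have q1Trans : ∀ {x y z : X}, (x, y) ∈ q1 → (y, z) ∈ q1 → (x, z) ∈ q1 := by
      rintro x y z (h | ⟨h1', h2'⟩) (h' | ⟨h1'', h2''⟩)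
      · exact Or.inl (qTrans h h')
      · exact Or.inr ⟨qTrans h h1'', h2''⟩
      · exact Or.inr ⟨h1', qTrans h2' h'⟩
      · exact Or.inr ⟨h1', h2''⟩
    have q1Sym : ∀ {x y : X}, (x, y) ∈ q1 → (y, x) ∈ q1 → (x, y) ∈ S := by
      rintro x y (h | ⟨h1', h2'⟩) (h' | ⟨h1'', h2''⟩)
      · exact qSym h h'
      · exact absurd (qTrans h2'' (qTrans h h1'')) hab_q
      · exact absurd (qTrans h2' (qTrans h' h1')) hab_q
      · exact absurd (qTrans h2' h1'') hab_q
    have hba_q1 : (b, a) ∈ q1 := Or.inr ⟨Sq (sRefl b), Sq (sRefl a)⟩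
    have hab_q1 : (a, b) ∉ q1 := by
      rintro (h | ⟨h1', _⟩)
      · exact hab_q h
      · exact hab_q h1'
    -- quotient by S
    let sd : Setoid X := ⟨fun x y => (x, y) ∈ S,
      ⟨fun x => sRefl x, fun h => sSymm _ _ h, fun h h' => sTrans _ _ _ h h'⟩⟩
    let rQ : Quotient sd → Quotient sd → Prop :=
      Quotient.lift₂ (fun x y => (x, y) ∈ q1)
        (by
          intro x y x' y' hx hy
          have hx' : (x, x') ∈ S := hx
          have hy' : (y, y') ∈ S := hy
          refine propext ⟨fun h => ?_, fun h => ?_⟩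
          · exact q1Trans (qq1 (Sq (sSymm _ _ hx'))) (q1Trans h (qq1 (Sq hy')))
          · exact q1Trans (qq1 (Sq hx')) (q1Trans h (qq1 (Sq (sSymm _ _ hy')))))
    have rQ_mk : ∀ x y : X, rQ (Quotient.mk sd x) (Quotient.mk sd y) ↔ (x, y) ∈ q1 :=
      fun x y => Iff.rfl
    haveI : IsRefl (Quotient sd) rQ := by
      constructor
      intro u
      induction u using Quotient.ind
      exact qq1 (Sq (sRefl _))
    haveI : IsTrans (Quotient sd) rQ := by
      constructor
      intro u v w
      induction u using Quotient.ind
      induction v using Quotient.ind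
      induction w using Quotient.ind
      exact fun h h' => q1Trans h h'
    haveI : IsAntisymm (Quotient sd) rQ := by
      constructor
      intro u v
      induction u using Quotient.ind
      induction v using Quotient.ind
      intro h h'
      exact Quotient.sound (q1Sym h h')
    haveI : IsPreorder (Quotient sd) rQ := {}
    haveI : IsPartialOrder (Quotient sd) rQ := {}
    obtain ⟨s, hs_lin, hs_le⟩ := extend_partialOrder rQ
    haveI := hs_lin
    set T : Set (X × X) := {p | s (Quotient.mk sd p.1) (Quotient.mk sd p.2)} with hTdef
    have hTsym : ∀ {x y : X}, (x, y) ∈ T → (y, x) ∈ T → (x, y) ∈ S := by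
      intro x y h h'
      have := antisymm_of s h h'
      exact Quotient.exact this
    refine ⟨T, ⟨⟨fun x => refl_of s _,
        fun x y z h h' => trans_of s h h'⟩,
        fun x y => total_of s _ _, ?_, ?_⟩, ?_⟩
    · -- asymPart pr ⊆ asymPart T
      intro p hp
      have hp1 : (p.1, p.2) ∈ q1 := qq1 (Or.inr hp)
      refine ⟨hs_le _ _ hp1, fun h => ?_⟩
      have hS' : (p.1, p.2) ∈ S := hTsym (hs_le _ _ hp1) h
      exact Pirr p.1 (PS hp (sSymm _ _ hS'))
    · -- symPart T = S
      apply Set.eq_of_subset_of_subset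
      · intro p hp
        exact hTsym hp.1 hp.2
      · intro p hp
        have : (p.1, p.2) ∈ q1 := qq1 (Sq hp)
        have h1' : (p.2, p.1) ∈ q1 := qq1 (Sq (sSymm _ _ hp))
        exact ⟨hs_le _ _ this, hs_le _ _ h1'⟩
    · -- (a, b) ∉ T
      intro h
      have hba : (b, a) ∈ T := hs_le _ _ hba_q1
      exact hab_S (hTsym h hba)
  -- main proof
  apply Set.eq_of_subset_of_subset
  · intro p hp
    by_contra hcon
    obtain ⟨T, hT, hpT⟩ := key p.1 p.2 (fun h => hcon (Or.inl h)) (fun h => hcon (Or.inr h))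
    exact hpT (hp T hT)
  · rintro p (hp | hp)
    · intro T hT
      obtain ⟨⟨Trefl, Ttrans⟩, Ttot, TasymP, TsymS⟩ := hT
      by_cases h : (p.2, p.1) ∈ pr
      · have e : p.1 = p.2 := prAnti _ _ hp h
        show (p.1, p.2) ∈ T
        rw [← e]
        exact Trefl p.1
      · exact (TasymP ⟨hp, h⟩).1
    · intro T hT
      obtain ⟨_, _, _, TsymS⟩ := hT
      rw [← TsymS] at hp
      exact hp.1
end

section
/- Let ≾ be a preorder on a nonempty set X with asymmetric part P_≾. An equivalence relation S on X satisfies the equalities P_≾ ∘ S = S ∘ P_≾ = P_≾ if and only if S ⊆ R_≾, where R_≾ is the equipotency relation of ≾. -/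
variable {X : Type*}

lemma mem_indiff_self (G : Set (X × X)) (x : X) : (x, x) ∈ indiff G := by
  constructor <;> exact fun h => h.2 h.1

lemma not_mem_indiff_iff (G : Set (X × X)) (x w : X) :
    (x, w) ∉ indiff G ↔ (x, w) ∈ asymPart G ∨ (w, x) ∈ asymPart G := by
  unfold indiff; simp only [Set.mem_setOf_eq]; tauto

theorem comp_eq_asymPart_iff_subset_equipot [Nonempty X] (pre S : Set (X × X))
    (hpre : IsPreorderRel pre) (hS : IsEquivRel S) :
    (relComp (asymPart pre) S = asymPart pre ∧
      relComp S (asymPart pre) = asymPart pre) ↔ S ⊆ equipot pre := by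

  obtain ⟨hrefl, htrans⟩ := hpre
  obtain ⟨hSrefl, hSsymm, hStrans⟩ := hS
  constructor
  · rintro ⟨h1, h2⟩ ⟨x, y⟩ hxy
    have key : ∀ a b w, (a, b) ∈ S → (a, w) ∈ indiff pre → (b, w) ∈ indiff pre := by
      intro a b w hab haw
      by_contra hbw
      rcases (not_mem_indiff_iff pre b w).1 hbw with h | h
      · exact haw.1 (h2 ▸ ⟨b, hab, h⟩)
      · exact haw.2 (h1 ▸ ⟨b, h, hSsymm _ _ hab⟩)
    ext w
    simp only [Set.mem_setOf_eq]
    exact ⟨key x y w hxy, key y x w (hSsymm _ _ hxy)⟩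
  · intro hSR
    constructor
    · apply Set.Subset.antisymm
      · rintro ⟨x, y⟩ ⟨z, hxz, hzy⟩
        have heq := hSR hzy
        simp only [equipot, Set.mem_setOf_eq] at heq
        have hzx : (z, x) ∉ indiff pre :=
          (not_mem_indiff_iff pre z x).2 (Or.inr hxz)
        have hyx : (y, x) ∉ indiff pre := by
          intro h
          exact hzx (heq ▸ h : x ∈ {w | (z, w) ∈ indiff pre})
        rcases (not_mem_indiff_iff pre y x).1 hyx with h | h
        · -- (y,x) ∈ asymPart: derive contradiction
          exfalso
          have hyz : (y, z) ∈ asymPart pre :=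
            ⟨htrans _ _ _ h.1 hxz.1, fun hc => hxz.2 (htrans _ _ _ hc h.1)⟩
          have : (y, z) ∉ indiff pre :=
            (not_mem_indiff_iff pre y z).2 (Or.inl hyz)
          exact this (heq ▸ mem_indiff_self pre z : z ∈ {w | (y, w) ∈ indiff pre})
        · exact h
      · rintro ⟨x, y⟩ h
        exact ⟨y, h, hSrefl y⟩
    · apply Set.Subset.antisymm
      · rintro ⟨x, y⟩ ⟨z, hxz, hzy⟩
        have heq := hSR hxz
        simp only [equipot, Set.mem_setOf_eq] at heq
        have hzy' : (z, y) ∉ indiff pre :=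
          (not_mem_indiff_iff pre z y).2 (Or.inl hzy)
        have hxy : (x, y) ∉ indiff pre := by
          intro h
          exact hzy' (heq ▸ h : y ∈ {w | (z, w) ∈ indiff pre})
        rcases (not_mem_indiff_iff pre x y).1 hxy with h | h
        · exact h
        · exfalso
          have hzx : (z, x) ∈ asymPart pre :=
            ⟨htrans _ _ _ hzy.1 h.1, fun hc => h.2 (htrans _ _ _ hc hzy.1)⟩
          have hnx : (z, x) ∉ indiff pre :=
            (not_mem_indiff_iff pre z x).2 (Or.inl hzx)
          have : (x, x) ∉ indiff pre := by
            intro hxx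
            exact hnx (heq ▸ hxx : x ∈ {w | (z, w) ∈ indiff pre})
          exact this (mem_indiff_self pre x)
      · rintro ⟨x, y⟩ h
        exact ⟨x, hSrefl x, h⟩
end

section
/- For every partial order ≼ on a nonempty set X and every equivalence relation S on X such that S ⊆ R_≼ (the equipotency relation of ≼), there exists a total preorder S-extension of ≼. -/
variable {X : Type*}

theorem exists_S_extension_of_subset_equipot [Nonempty X] (pr S : Set (X × X))
    (hpr : IsPartialOrderRel pr) (hS : IsEquivRel S) (hsub : S ⊆ equipot pr) :
    ∃ T : Set (X × X), IsSExtension pr S T := by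
  obtain ⟨⟨hrefl, htrans⟩, hanti⟩ := hpr
  obtain ⟨hSrefl, hSsymm, hStrans⟩ := hS
  set P : Set (X × X) := asymPart pr with hPdef
  set P' : Set (X × X) := relComp S (relComp P S) with hP'def
  have hP'mem : ∀ x y : X, (x, y) ∈ P' ↔ ∃ a b, (x, a) ∈ S ∧ (a, b) ∈ P ∧ (b, y) ∈ S := by
    intro x y
    constructor
    · rintro ⟨a, hxa, b, hab, hby⟩; exact ⟨a, b, hxa, hab, hby⟩
    · rintro ⟨a, b, hxa, hab, hby⟩; exact ⟨a, hxa, b, hab, hby⟩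
  -- equal indifference sets along S
  have hind : ∀ {x y : X}, (x, y) ∈ S → ∀ z, ((x, z) ∈ indiff pr ↔ (y, z) ∈ indiff pr) := by
    intro x y hxy z
    have h := hsub hxy
    simp only [equipot, Set.mem_setOf_eq] at h
    exact Set.ext_iff.mp h z
  have hself : ∀ b : X, (b, b) ∈ indiff pr := by
    intro b
    exact ⟨fun h => h.2 (hrefl b), fun h => h.2 (hrefl b)⟩
  -- core: P ∘ S ∘ P ⊆ P
  have hcore : ∀ a b c d : X, (a, b) ∈ P → (b, c) ∈ S → (c, d) ∈ P → (a, d) ∈ P := by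
    intro a b c d hab hbc hcd
    have hdnotIc : (c, d) ∉ indiff pr := fun h => h.1 hcd
    have hdnotIb : (b, d) ∉ indiff pr := fun h => hdnotIc ((hind hbc d).mp h)
    have hcases : (b, d) ∈ P ∨ (d, b) ∈ P := by
      by_contra hcon
      push_neg at hcon
      exact hdnotIb ⟨hcon.1, hcon.2⟩
    rcases hcases with hbd | hdb
    · refine ⟨htrans _ _ _ hab.1 hbd.1, fun hda => ?_⟩
      exact hbd.2 (htrans _ _ _ hda hab.1)
    · exfalso
      have hcb : (c, b) ∈ P := by
        refine ⟨htrans _ _ _ hcd.1 hdb.1, fun hbc' => ?_⟩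
        exact hdb.2 (htrans _ _ _ hbc' hcd.1)
      have : (c, b) ∈ indiff pr := (hind hbc b).mp (hself b)
      exact this.1 hcb
  -- P' is irreflexive
  have hirr : ∀ x : X, (x, x) ∉ P' := by
    intro x hx
    obtain ⟨a, b, hxa, hab, hbx⟩ := (hP'mem x x).mp hx
    have hba : (b, a) ∈ S := hStrans _ _ _ hbx hxa
    have : (a, b) ∈ indiff pr := (hind hba b).mp (hself b)
    exact this.1 hab
  -- P' is transitive
  have hP'trans : ∀ x y z : X, (x, y) ∈ P' → (y, z) ∈ P' → (x, z) ∈ P' := by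
    intro x y z hxy hyz
    obtain ⟨a, b, hxa, hab, hby⟩ := (hP'mem x y).mp hxy
    obtain ⟨c, d, hyc, hcd, hdz⟩ := (hP'mem y z).mp hyz
    have hbc : (b, c) ∈ S := hStrans _ _ _ hby hyc
    exact (hP'mem x z).mpr ⟨a, d, hxa, hcore a b c d hab hbc hcd, hdz⟩
  -- S absorbs into P'
  have habsL : ∀ x y z : X, (x, y) ∈ S → (y, z) ∈ P' → (x, z) ∈ P' := by
    intro x y z hxy h
    obtain ⟨a, b, hya, hab, hbz⟩ := (hP'mem y z).mp h
    exact (hP'mem x z).mpr ⟨a, b, hStrans _ _ _ hxy hya, hab, hbz⟩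
  have habsR : ∀ x y z : X, (x, y) ∈ P' → (y, z) ∈ S → (x, z) ∈ P' := by
    intro x y z h hyz
    obtain ⟨a, b, hxa, hab, hby⟩ := (hP'mem x y).mp h
    exact (hP'mem x z).mpr ⟨a, b, hxa, hab, hStrans _ _ _ hby hyz⟩
  -- quotient by S
  let sd : Setoid X := ⟨fun x y => (x, y) ∈ S,
    ⟨fun x => hSrefl x, fun h => hSsymm _ _ h, fun h1 h2 => hStrans _ _ _ h1 h2⟩⟩
  let r : Quotient sd → Quotient sd → Prop := fun a b =>
    a = b ∨ ∃ x y : X, (x, y) ∈ P' ∧ a = Quotient.mk sd x ∧ b = Quotient.mk sd y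
  have hrpo : IsPartialOrder (Quotient sd) r := by
    refine { refl := fun a => Or.inl rfl, trans := ?_, antisymm := ?_ }
    · rintro a b c (rfl | ⟨x, y, hxy, rfl, rfl⟩) hbc
      · exact hbc
      · rcases hbc with heq | ⟨u, v, huv, hequ, rfl⟩
        · exact Or.inr ⟨x, y, hxy, rfl, heq.symm⟩
        · have hyu : (y, u) ∈ S := Quotient.exact hequ
          exact Or.inr ⟨x, v, hP'trans _ _ _ (habsR _ _ _ hxy hyu) huv, rfl, rfl⟩
    · rintro a b (rfl | ⟨x, y, hxy, rfl, rfl⟩) hba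
      · rfl
      · rcases hba with heq | ⟨u, v, huv, hequ, heqv⟩
        · exact heq.symm
        · exfalso
          have hyu : (y, u) ∈ S := Quotient.exact hequ
          have hvx : (v, x) ∈ S := Quotient.exact heqv.symm
          have : (x, x) ∈ P' :=
            habsR _ _ _ (hP'trans _ _ _ (habsR _ _ _ hxy hyu) huv) hvx
          exact hirr x this
  obtain ⟨s, hslin, hrs⟩ := @extend_partialOrder (Quotient sd) r hrpo
  haveI := hslin
  refine ⟨{p | s (Quotient.mk sd p.1) (Quotient.mk sd p.2)}, ?_, ?_, ?_, ?_⟩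
  · exact ⟨fun x => refl_of s _,
      fun x y z hxy hyz => trans_of s hxy hyz⟩
  · exact fun x y => total_of s _ _
  · rintro ⟨x, y⟩ hxy
    have hxyP' : (x, y) ∈ P' := (hP'mem x y).mpr ⟨x, y, hSrefl x, hxy, hSrefl y⟩
    have hs1 : s (Quotient.mk sd x) (Quotient.mk sd y) :=
      hrs _ _ (Or.inr ⟨x, y, hxyP', rfl, rfl⟩)
    refine ⟨hs1, fun hs2 => ?_⟩
    have heq : Quotient.mk sd x = Quotient.mk sd y := antisymm_of s hs1 hs2
    have hS' : (y, x) ∈ S := Quotient.exact heq.symm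
    exact hirr x ((hP'mem x x).mpr ⟨x, y, hSrefl x, hxy, hS'⟩)
  · ext ⟨x, y⟩
    simp only [symPart, Set.mem_setOf_eq]
    constructor
    · rintro ⟨h1, h2⟩
      have heq : Quotient.mk sd x = Quotient.mk sd y := antisymm_of s h1 h2
      exact Quotient.exact heq
    · intro h
      have heq : Quotient.mk sd x = Quotient.mk sd y := Quotient.sound h
      constructor
      · rw [heq]; exact refl_of s _
      · rw [heq]; exact refl_of s _
end

section
/- Let S be an equivalence relation on a nonempty set X and ≼ a partial order on X with asymmetric part P_≼. Then S ⊆ I_≼ (the indifference relation of ≼) if and only if the composition S ∘ P_≼ ∘ S is irreflexive, i.e., (x,x) ∉ S ∘ P_≼ ∘ S for all x ∈ X. -/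
variable {X : Type*}

theorem subset_indiff_iff_irrefl_comp [Nonempty X] (pr S : Set (X × X))
    (hpr : IsPartialOrderRel pr) (hS : IsEquivRel S) :
    S ⊆ indiff pr ↔ ∀ x : X, (x, x) ∉ relComp S (relComp (asymPart pr) S) := by
  obtain ⟨hrefl, hsymm, htrans⟩ := hS
  constructor
  · rintro h x ⟨a, hxa, b, hab, hbx⟩
    have hba : (b, a) ∈ S := htrans _ _ _ hbx hxa
    exact (h hba).2 hab
  · intro h p hp
    constructor
    · intro hP
      exact h p.2 ⟨p.1, hsymm _ _ hp, p.2, hP, hrefl _⟩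
    · intro hP
      exact h p.1 ⟨p.2, hp, p.1, hP, hrefl _⟩
end

section
/- Let S be an equivalence relation on a nonempty set X and ≼ a partial order on X with asymmetric part P_≼. Then there exists a total preorder S-extension of ≼ if and only if the composition S ∘ P_≼ ∘ S is acyclic. -/
variable {X : Type*}

section Aux
variable {X : Type*}

private lemma acyclic_iff_irrefl (G : Set (X × X)) :
    IsAcyclicRel G ↔ ∀ x, ¬ Relation.TransGen (fun a b => (a, b) ∈ G) x x := by
  constructor
  · intro hac x hx
    obtain ⟨c, hrc, hcx⟩ := Relation.TransGen.tail'_iff.mp hx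
    obtain ⟨l, hchain, hlast⟩ := List.exists_isChain_cons_of_relationReflTransGen hrc
    have hL : List.Chain' (fun a b => (a, b) ∈ G) (x :: l) := hchain
    have hlen : (x :: l).length = l.length + 1 := by simp
    have hedges : ∀ i : Fin l.length,
        (((x :: l).get (Fin.cast hlen.symm i.castSucc)),
          ((x :: l).get (Fin.cast hlen.symm i.succ))) ∈ G := by
      intro i
      exact List.isChain_iff_getElem.mp hL i.val (by simpa using i.isLt)
    have := hac l.length (fun i => (x :: l).get (Fin.cast hlen.symm i)) hedges
    apply this
    have h0 : (x :: l).get (Fin.cast hlen.symm (0 : Fin (l.length + 1))) = x := rfl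
    have hlast' : (x :: l).get (Fin.cast hlen.symm (Fin.last l.length)) = c := by
      rw [← hlast]
      rw [List.getLast_eq_getElem]
      simp [List.get_eq_getElem]
    show ((x :: l).get (Fin.cast hlen.symm (Fin.last l.length)),
        (x :: l).get (Fin.cast hlen.symm 0)) ∈ G
    rw [h0, hlast']
    exact hcx
  · intro hirr n x hchain hcl
    have key : ∀ i : Fin (n + 1), Relation.ReflTransGen (fun a b => (a, b) ∈ G) (x 0) (x i) := by
      intro i
      induction i using Fin.induction with
      | zero => exact Relation.ReflTransGen.refl
      | succ j ih => exact ih.tail (hchain j)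
    exact hirr (x 0) (Relation.TransGen.tail' (key (Fin.last n)) hcl)

end Aux

theorem exists_S_extension_iff_acyclic [Nonempty X] (pr S : Set (X × X))
    (hpr : IsPartialOrderRel pr) (hS : IsEquivRel S) :
    (∃ T : Set (X × X), IsSExtension pr S T) ↔
      IsAcyclicRel (relComp S (relComp (asymPart pr) S)) := by
  set G := relComp S (relComp (asymPart pr) S) with hG
  rw [acyclic_iff_irrefl]
  obtain ⟨hSrefl, hSsymm, hStrans⟩ := hS
  constructor
  · rintro ⟨T, ⟨hTrefl, hTtrans⟩, hTtotal, hPsub, hsym⟩ x hx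
    have hGsub : G ⊆ asymPart T := by
      rintro ⟨a, b⟩ ⟨z, haz, w, hzw, hwb⟩
      have haz' : (a, z) ∈ symPart T := by rw [hsym]; exact haz
      have hwb' : (w, b) ∈ symPart T := by rw [hsym]; exact hwb
      have hzw' : (z, w) ∈ asymPart T := hPsub hzw
      have e1 : (a, z) ∈ T := haz'.1
      have e2 : (z, a) ∈ T := haz'.2
      have e3 : (w, b) ∈ T := hwb'.1
      have e4 : (b, w) ∈ T := hwb'.2
      have e5 : (z, w) ∈ T := hzw'.1
      have e6 : (w, z) ∉ T := hzw'.2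
      refine ⟨hTtrans _ _ _ e1 (hTtrans _ _ _ e5 e3), ?_⟩
      intro hba
      have hba' : (b, a) ∈ T := hba
      exact e6 (hTtrans _ _ _ e3 (hTtrans _ _ _ hba' e1))
    have htrans : Transitive (fun a b : X => (a, b) ∈ asymPart T) := by
      intro a b c hab hbc
      exact ⟨hTtrans _ _ _ hab.1 hbc.1, fun hca => hab.2 (hTtrans _ _ _ hbc.1 hca)⟩
    have h2 := Relation.TransGen.mono (fun a b h => hGsub h) _ _ hx
    rw [@Relation.transGen_eq_self _ _ ⟨htrans⟩] at h2
    exact h2.2 h2.1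
  · intro hirr
    have hGS : ∀ {a b c : X}, (a, b) ∈ G → (b, c) ∈ S → (a, c) ∈ G := by
      rintro a b c ⟨z, haz, w, hzw, hwb⟩ hbc
      exact ⟨z, haz, w, hzw, hStrans _ _ _ hwb hbc⟩
    have hSG : ∀ {a b c : X}, (a, b) ∈ S → (b, c) ∈ G → (a, c) ∈ G := by
      rintro a b c hab ⟨z, hbz, w, hzw, hwc⟩
      exact ⟨z, hStrans _ _ _ hab hbz, w, hzw, hwc⟩
    set r := fun a b : X => (a, b) ∈ G with hr
    have hHS : ∀ {a b c : X}, Relation.TransGen r a b → (b, c) ∈ S →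
        Relation.TransGen r a c := by
      intro a b c h hbc
      obtain ⟨d, hd, hdb⟩ := Relation.TransGen.tail'_iff.mp h
      exact Relation.TransGen.tail' hd (hGS hdb hbc)
    have hSH : ∀ {a b c : X}, (a, b) ∈ S → Relation.TransGen r b c →
        Relation.TransGen r a c := by
      intro a b c hab h
      obtain ⟨d, hbd, hd⟩ := Relation.TransGen.head'_iff.mp h
      exact Relation.TransGen.head' (hSG hab hbd) hd
    letI s : Setoid X := ⟨fun a b => (a, b) ∈ S,
      ⟨fun a => hSrefl a, fun h => hSsymm _ _ h, fun h h' => hStrans _ _ _ h h'⟩⟩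
    let LT : Quotient s → Quotient s → Prop := fun A B =>
      ∃ a b : X, ⟦a⟧ = A ∧ ⟦b⟧ = B ∧ Relation.TransGen r a b
    have hLTtrans : ∀ {A B C}, LT A B → LT B C → LT A C := by
      rintro A B C ⟨a, b, ha, hb, h⟩ ⟨b', c, hb', hc, h'⟩
      refine ⟨a, c, ha, hc, h.trans (hSH ?_ h')⟩
      exact hSsymm _ _ (Quotient.eq.mp (hb'.trans hb.symm))
    have hLTirr : ∀ A, ¬ LT A A := by
      rintro A ⟨a, b, ha, hb, h⟩
      have hab : (a, b) ∈ S := Quotient.eq.mp (ha.trans hb.symm)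
      exact hirr a (hHS h (hSsymm _ _ hab))
    haveI : IsPartialOrder (Quotient s) (fun A B => A = B ∨ LT A B) :=
      { refl := fun A => Or.inl rfl
        trans := by
          rintro A B C (rfl | h) (rfl | h')
          · exact Or.inl rfl
          · exact Or.inr h'
          · exact Or.inr h
          · exact Or.inr (hLTtrans h h')
        antisymm := by
          intro A B hab hba
          rcases hab with rfl | h
          · rfl
          rcases hba with rfl | h'
          · rfl
          exact absurd (hLTtrans h h') (hLTirr A) }
    obtain ⟨le, hlin, hsub⟩ :=
      extend_partialOrder (fun A B : Quotient s => A = B ∨ LT A B)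
    haveI := hlin
    refine ⟨{p | le ⟦p.1⟧ ⟦p.2⟧}, ⟨fun x => refl_of le _,
      fun x y z h h' => _root_.trans_of le h h'⟩, fun x y => total_of le _ _, ?_, ?_⟩
    · rintro ⟨a, b⟩ hab
      have hGab : (a, b) ∈ G := ⟨a, hSrefl a, b, hab, hSrefl b⟩
      have hlt : LT ⟦a⟧ ⟦b⟧ := ⟨a, b, rfl, rfl, Relation.TransGen.single hGab⟩
      refine ⟨hsub _ _ (Or.inr hlt), ?_⟩
      intro hba
      have heq : (⟦a⟧ : Quotient s) = ⟦b⟧ :=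
        antisymm_of le (hsub _ _ (Or.inr hlt)) hba
      exact hirr a (hHS (Relation.TransGen.single hGab)
        (hSsymm _ _ (Quotient.eq.mp heq)))
    · ext ⟨a, b⟩
      simp only [symPart, Set.mem_setOf_eq]
      constructor
      · rintro ⟨h1, h2⟩
        exact Quotient.eq.mp (antisymm_of le h1 h2)
      · intro h
        have heq : (⟦a⟧ : Quotient s) = ⟦b⟧ := Quotient.eq.mpr h
        refine ⟨?_, ?_⟩ <;> rw [heq] <;> exact refl_of le _
end

section
/- Let ≼ be a partial order on a nonempty set X with asymmetric part P_≼ and S an equivalence relation on X. If the composition S ∘ P_≼ ∘ S is acyclic, then the intersection of all total preorder S-extensions of ≼ equals the preorder S ∪ TH(S ∘ P_≼ ∘ S), i.e., the preorder whose asymmetric part is the transitive hull of S ∘ P_≼ ∘ S and whose symmetric part coincides with S. -/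
variable {X : Type*}

lemma chain_of_transGen {r : X → X → Prop} {a b : X} (h : Relation.TransGen r a b) :
    ∃ (n : ℕ) (x : Fin (n + 1) → X), x 0 = a ∧ (∀ i : Fin n, r (x i.castSucc) (x i.succ)) ∧
      r (x (Fin.last n)) b := by
  induction h with
  | @single c hab => exact ⟨0, fun _ => a, rfl, fun i => i.elim0, hab⟩
  | @tail b c hab hbc ih =>
    obtain ⟨n, x, hx0, hedge, hlast⟩ := ih
    refine ⟨n + 1, Fin.snoc x b, ?_, ?_, ?_⟩
    · rw [← Fin.castSucc_zero, Fin.snoc_castSucc]; exact hx0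
    · intro i
      refine Fin.lastCases ?_ ?_ i
      · rw [Fin.succ_last, Fin.snoc_castSucc, Fin.snoc_last]; exact hlast
      · intro j
        rw [Fin.succ_castSucc, Fin.snoc_castSucc, Fin.snoc_castSucc]; exact hedge j
    · simpa [Fin.snoc_last] using hbc

lemma isAcyclic_irrefl {G : Set (X × X)} (h : IsAcyclicRel G) (a : X) :
    ¬ Relation.TransGen (fun u v => (u, v) ∈ G) a a := by
  intro hh
  obtain ⟨n, x, hx0, hedge, hlast⟩ := chain_of_transGen hh
  exact h n x hedge (by rwa [hx0])

theorem sInter_S_extensions_eq_of_acyclic [Nonempty X] (pr S : Set (X × X))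
    (hpr : IsPartialOrderRel pr) (hS : IsEquivRel S)
    (hacyc : IsAcyclicRel (relComp S (relComp (asymPart pr) S))) :
    ⋂₀ {T : Set (X × X) | IsSExtension pr S T} =
      S ∪ TransHull (relComp S (relComp (asymPart pr) S)) := by
  obtain ⟨hSrefl, hSsymm, hStrans⟩ := hS
  set P : Set (X × X) := asymPart pr with hP
  set Q : Set (X × X) := relComp S (relComp P S) with hQ
  have habsL : ∀ {a b c : X}, (a, b) ∈ S → (b, c) ∈ Q → (a, c) ∈ Q := by
    rintro a b c hab ⟨z, hbz, hz⟩
    exact ⟨z, hStrans _ _ _ hab hbz, hz⟩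
  have habsR : ∀ {a b c : X}, (a, b) ∈ Q → (b, c) ∈ S → (a, c) ∈ Q := by
    rintro a b c ⟨z, haz, w, hzw, hwb⟩ hbc
    exact ⟨z, haz, w, hzw, hStrans _ _ _ hwb hbc⟩
  set Qr : X → X → Prop := fun a b => (a, b) ∈ Q with hQrdef
  have htransR : ∀ {a b c : X}, Relation.TransGen Qr a b → (b, c) ∈ S →
      Relation.TransGen Qr a c := by
    intro a b c h
    induction h with
    | @single u hab => exact fun hbc => Relation.TransGen.single (habsR hab hbc)
    | @tail u v hab huv ih => exact fun hbc => hab.tail (habsR huv hbc)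
  have htransL : ∀ {a b c : X}, (a, b) ∈ S → Relation.TransGen Qr b c →
      Relation.TransGen Qr a c := by
    intro a b c hab h
    induction h with
    | @single u h1 => exact Relation.TransGen.single (habsL hab h1)
    | @tail u v h1 h2 ih => exact ih.tail h2
  apply Set.Subset.antisymm
  · intro p hp
    by_contra hcon
    obtain ⟨x, y⟩ := p
    have hxyS : (x, y) ∉ S := fun h => hcon (Or.inl h)
    have hxyT : ¬ Relation.TransGen Qr x y := fun h => hcon (Or.inr h)
    set Q'r : X → X → Prop := fun a b => Qr a b ∨ ((a, y) ∈ S ∧ (x, b) ∈ S) with hQ'r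
    -- any TransGen Q' path is either a pure Q path or records contact with x and y
    have L2 : ∀ {a b : X}, Relation.TransGen Q'r a b →
        Relation.TransGen Qr a b ∨
          (((x, b) ∈ S ∨ Relation.TransGen Qr x b) ∧
            ((a, y) ∈ S ∨ Relation.TransGen Qr a y)) := by
      intro a b h
      induction h with
      | @single u h1 =>
        rcases h1 with h1 | ⟨h2, h3⟩
        · exact Or.inl (Relation.TransGen.single h1)
        · exact Or.inr ⟨Or.inl h3, Or.inl h2⟩
      | @tail u v h1 huv ih =>
        rcases huv with huv | ⟨huy, hxv⟩
        · rcases ih with ih | ⟨hxb, hay⟩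
          · exact Or.inl (ih.tail huv)
          · refine Or.inr ⟨?_, hay⟩
            rcases hxb with h | h
            · exact Or.inr (Relation.TransGen.single (habsL h huv))
            · exact Or.inr (h.tail huv)
        · rcases ih with ih | ⟨hxb, hay⟩
          · exact Or.inr ⟨Or.inl hxv, Or.inr (htransR ih huy)⟩
          · exfalso
            rcases hxb with h | h
            · exact hxyS (hStrans _ _ _ h huy)
            · exact hxyT (htransR h huy)
    have hW_irrefl : ∀ a, ¬ Relation.TransGen Q'r a a := by
      intro a h
      rcases L2 h with h | ⟨hxa, hay⟩
      · exact isAcyclic_irrefl hacyc a h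
      · rcases hxa with h1 | h1 <;> rcases hay with h2 | h2
        · exact hxyS (hStrans _ _ _ h1 h2)
        · exact hxyT (htransL h1 h2)
        · exact hxyT (htransR h1 h2)
        · exact hxyT (h1.trans h2)
    have habsL' : ∀ {a b c : X}, (a, b) ∈ S → Q'r b c → Q'r a c := by
      rintro a b c hab (h | ⟨h1, h2⟩)
      · exact Or.inl (habsL hab h)
      · exact Or.inr ⟨hStrans _ _ _ hab h1, h2⟩
    have habsR' : ∀ {a b c : X}, Q'r a b → (b, c) ∈ S → Q'r a c := by
      rintro a b c (h | ⟨h1, h2⟩) hbc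
      · exact Or.inl (habsR h hbc)
      · exact Or.inr ⟨h1, hStrans _ _ _ h2 hbc⟩
    have hWL : ∀ {a b c : X}, (a, b) ∈ S → Relation.TransGen Q'r b c →
        Relation.TransGen Q'r a c := by
      intro a b c hab h
      induction h with
      | @single u h1 => exact Relation.TransGen.single (habsL' hab h1)
      | @tail u v h1 h2 ih => exact ih.tail h2
    have hWR : ∀ {a b c : X}, Relation.TransGen Q'r a b → (b, c) ∈ S →
        Relation.TransGen Q'r a c := by
      intro a b c h
      induction h with
      | @single u hab => exact fun hbc => Relation.TransGen.single (habsR' hab hbc)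
      | @tail u v hab huv ih => exact fun hbc => hab.tail (habsR' huv hbc)
    -- quotient by S
    letI s : Setoid X := ⟨fun a b => (a, b) ∈ S,
      ⟨fun a => hSrefl a, fun h => hSsymm _ _ h, fun h h' => hStrans _ _ _ h h'⟩⟩
    set r₀ : X → X → Prop := fun a b => (a, b) ∈ S ∨ Relation.TransGen Q'r a b with hr₀
    have hcomp : ∀ {a b c : X}, r₀ a b → r₀ b c → r₀ a c := by
      rintro a b c (h1 | h1) (h2 | h2)
      · exact Or.inl (hStrans _ _ _ h1 h2)
      · exact Or.inr (hWL h1 h2)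
      · exact Or.inr (hWR h1 h2)
      · exact Or.inr (h1.trans h2)
    have hanti : ∀ {a b : X}, r₀ a b → r₀ b a → (a, b) ∈ S := by
      rintro a b (h1 | h1) (h2 | h2)
      · exact h1
      · exact absurd (hWR h2 h1) (hW_irrefl b)
      · exact absurd (hWR h1 h2) (hW_irrefl a)
      · exact absurd (h1.trans h2) (hW_irrefl a)
    set ρ : Quotient s → Quotient s → Prop := fun p q =>
      ∃ a b, p = Quotient.mk s a ∧ q = Quotient.mk s b ∧ r₀ a b with hρ
    haveI hpo : IsPartialOrder (Quotient s) ρ :=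
      { refl := fun p => by
          obtain ⟨a, rfl⟩ := Quotient.exists_rep p
          exact ⟨a, a, rfl, rfl, Or.inl (hSrefl a)⟩
        trans := by
          rintro p q r ⟨a, b, rfl, rfl, h1⟩ ⟨b', c, hb, rfl, h2⟩
          have hbb' : (b, b') ∈ S := Quotient.exact hb
          exact ⟨a, c, rfl, rfl, hcomp (hcomp h1 (Or.inl hbb')) h2⟩
        antisymm := by
          rintro p q ⟨a, b, rfl, rfl, h1⟩ ⟨b', a', hb, ha, h2⟩
          have hbb' : (b, b') ∈ S := Quotient.exact hb
          have haa' : (a, a') ∈ S := Quotient.exact ha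
          have h2' : r₀ b a := hcomp (hcomp (Or.inl hbb') h2) (Or.inl (hSsymm _ _ haa'))
          exact Quotient.sound (hanti h1 h2') }
    obtain ⟨lin, hlin, hsub⟩ := extend_partialOrder ρ
    haveI := hlin
    set T : Set (X × X) := {p | lin (Quotient.mk s p.1) (Quotient.mk s p.2)} with hT
    have hlinS : ∀ {a b : X}, (a, b) ∈ S → lin (Quotient.mk s a) (Quotient.mk s b) := by
      intro a b h
      have : Quotient.mk s a = Quotient.mk s b := Quotient.sound h
      rw [this]
      exact refl_of lin _
    have hmemW : ∀ {a b : X}, Relation.TransGen Q'r a b →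
        lin (Quotient.mk s a) (Quotient.mk s b) ∧
          ¬ lin (Quotient.mk s b) (Quotient.mk s a) := by
      intro a b h
      have h1 : lin (Quotient.mk s a) (Quotient.mk s b) :=
        hsub _ _ ⟨a, b, rfl, rfl, Or.inr h⟩
      refine ⟨h1, fun h2 => ?_⟩
      have heq : Quotient.mk s a = Quotient.mk s b := antisymm h1 h2
      have hab : (a, b) ∈ S := Quotient.exact heq
      exact hW_irrefl a (hWR h (hSsymm _ _ hab))
    have hext : IsSExtension pr S T := by
      refine ⟨⟨fun a => refl_of lin _, fun a b c h1 h2 => _root_.trans h1 h2⟩,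
        fun a b => total_of lin _ _, ?_, ?_⟩
      · rintro ⟨a, b⟩ hab
        have hQab : (a, b) ∈ Q := ⟨a, hSrefl a, b, hab, hSrefl b⟩
        have hW : Relation.TransGen Q'r a b := Relation.TransGen.single (Or.inl hQab)
        exact hmemW hW
      · ext ⟨a, b⟩
        constructor
        · rintro ⟨h1, h2⟩
          have heq : Quotient.mk s a = Quotient.mk s b := antisymm h1 h2
          exact Quotient.exact heq
        · intro h
          exact ⟨hlinS h, hlinS (hSsymm _ _ h)⟩
    have hWyx : Relation.TransGen Q'r y x :=
      Relation.TransGen.single (Or.inr ⟨hSrefl y, hSrefl x⟩)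
    exact (hmemW hWyx).2 (Set.mem_sInter.mp hp T hext)
  · rintro ⟨a, b⟩ (hpS | hpT) <;> intro T hT <;>
      obtain ⟨hTpre, hTtot, hTP, hTsym⟩ := hT
    · have hps' : (a, b) ∈ symPart T := by rw [hTsym]; exact hpS
      exact hps'.1
    · have hQT : ∀ {u v : X}, (u, v) ∈ Q → (u, v) ∈ asymPart T := by
        rintro u v ⟨z, huz, w, hzw, hwv⟩
        have hz : (u, z) ∈ symPart T := by rw [hTsym]; exact huz
        have hw : (w, v) ∈ symPart T := by rw [hTsym]; exact hwv
        have hzw' := hTP hzw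
        refine ⟨hTpre.2 _ _ _ hz.1 (hTpre.2 _ _ _ hzw'.1 hw.1), fun hvu => ?_⟩
        exact hzw'.2 (hTpre.2 _ _ _ (hTpre.2 _ _ _ hw.1 hvu) hz.1)
      have hasymT : ∀ {u v w : X}, (u, v) ∈ asymPart T → (v, w) ∈ asymPart T →
          (u, w) ∈ asymPart T := by
        rintro u v w ⟨h1, h1'⟩ ⟨h2, h2'⟩
        exact ⟨hTpre.2 _ _ _ h1 h2, fun hwu => h2' (hTpre.2 _ _ _ hwu h1)⟩
      have hmem : (a, b) ∈ asymPart T := by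
        have hpT' : Relation.TransGen Qr a b := hpT
        clear hpT
        induction hpT' with
        | @single u h => exact hQT h
        | @tail u v h1 h2 ih => exact hasymT ih (hQT h2)
      exact hmem.1
end

section
/- Let S be an equivalence relation on a nonempty set X and ≼ a partial order on X with asymmetric part P_≼. Then ≼ has a unique total preorder S-extension if and only if S is maximal with respect to inclusion in the collection Σ*(≼) and the transitive hull TH(S ∘ P_≼ ∘ S) is negatively transitive. -/
variable {X : Type*}

section Aux

lemma aux_acyclic_of_subset {G V : Set (X × X)} (hirr : ∀ x, (x, x) ∉ V)
    (htr : ∀ x y z, (x, y) ∈ V → (y, z) ∈ V → (x, z) ∈ V) (hsub : G ⊆ V) :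
    IsAcyclicRel G := by
  intro n x hchain hcl
  have key : ∀ i : Fin (n + 1), i = 0 ∨ (x 0, x i) ∈ V := by
    intro i
    induction i using Fin.induction with
    | zero => exact Or.inl rfl
    | succ j ih =>
      right
      rcases ih with h | h
      · have := hchain j
        rw [h] at this
        exact hsub this
      · exact htr _ _ _ h (hsub (hchain j))
  rcases key (Fin.last n) with h | h
  · rw [h] at hcl
    exact hirr _ (hsub hcl)
  · exact hirr _ (htr _ _ _ h (hsub hcl))

lemma aux_exists_chain {G : Set (X × X)} {a b : X}
    (h : Relation.TransGen (fun u v => (u, v) ∈ G) a b) :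
    ∃ (n : ℕ) (x : Fin (n + 2) → X), x 0 = a ∧ x (Fin.last (n + 1)) = b ∧
      ∀ i : Fin (n + 1), (x i.castSucc, x i.succ) ∈ G := by
  induction h with
  | @single c h => exact ⟨0, ![a, c], rfl, rfl, fun i => by fin_cases i <;> simpa using h⟩
  | @tail b' c' h₁ h₂ ih =>
    obtain ⟨n, x, h0, hl, he⟩ := ih
    refine ⟨n + 1, Fin.snoc x c', ?_, ?_, ?_⟩
    · rw [show (0 : Fin (n + 3)) = Fin.castSucc 0 by rfl, Fin.snoc_castSucc]
      exact h0
    · simp [Fin.snoc_last]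
    · intro i
      induction i using Fin.lastCases with
      | last =>
        rw [Fin.succ_last, Fin.snoc_last, Fin.snoc_castSucc, hl]
        exact h₂
      | cast j =>
        rw [Fin.succ_castSucc, Fin.snoc_castSucc, Fin.snoc_castSucc]
        exact he j

lemma aux_transGen_irrefl {G : Set (X × X)} (h : IsAcyclicRel G) (x : X) :
    (x, x) ∉ TransHull G := by
  intro hx
  obtain ⟨n, c, h0, hl, he⟩ := aux_exists_chain hx
  refine h n (fun j => c j.castSucc) ?_ ?_
  · intro i
    have := he i.castSucc
    show (c i.castSucc.castSucc, c i.succ.castSucc) ∈ G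
    rwa [Fin.succ_castSucc] at this
  · have := he (Fin.last n)
    rw [Fin.succ_last, hl] at this
    show (c (Fin.last n).castSucc, c 0) ∈ G
    rw [h0]
    exact this

/-- Lift a strict order compatible with `S` to a total preorder `S`-extension. -/
lemma aux_exists_extension {pr S V : Set (X × X)} (hS : IsEquivRel S)
    (hirr : ∀ x, (x, x) ∉ V)
    (htr : ∀ x y z, (x, y) ∈ V → (y, z) ∈ V → (x, z) ∈ V)
    (hSVS : ∀ u x y v, (u, x) ∈ S → (x, y) ∈ V → (y, v) ∈ S → (u, v) ∈ V)
    (hPV : asymPart pr ⊆ V) :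
    ∃ T, IsSExtension pr S T ∧ V ⊆ asymPart T := by
  obtain ⟨hrefl, hsymm, htrs⟩ := hS
  letI s : Setoid X := ⟨fun x y => (x, y) ∈ S,
    ⟨fun x => hrefl x, fun h => hsymm _ _ h, fun h1 h2 => htrs _ _ _ h1 h2⟩⟩
  have wd : ∀ (a₁ b₁ a₂ b₂ : X), a₁ ≈ a₂ → b₁ ≈ b₂ →
      ((a₁, b₁) ∈ V) = ((a₂, b₂) ∈ V) := by
    intro a₁ b₁ a₂ b₂ h1 h2
    have h1' : (a₁, a₂) ∈ S := h1
    have h2' : (b₁, b₂) ∈ S := h2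
    exact propext ⟨fun hv => hSVS _ _ _ _ (hsymm _ _ h1') hv h2',
      fun hv => hSVS _ _ _ _ h1' hv (hsymm _ _ h2')⟩
  let rV : Quotient s → Quotient s → Prop :=
    fun q1 q2 => Quotient.liftOn₂ q1 q2 (fun x y => (x, y) ∈ V) wd
  have rVmk : ∀ x y : X, rV ⟦x⟧ ⟦y⟧ ↔ (x, y) ∈ V := fun x y => Iff.rfl
  let r : Quotient s → Quotient s → Prop := fun q1 q2 => q1 = q2 ∨ rV q1 q2
  letI : IsPartialOrder (Quotient s) r :=
    { refl := fun q => Or.inl rfl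
      trans := by
        intro q1 q2 q3 h12 h23
        rcases h12 with rfl | h12
        · exact h23
        rcases h23 with rfl | h23
        · exact Or.inr h12
        refine Quotient.inductionOn₃ q1 q2 q3 (fun x y z h12 h23 => ?_) h12 h23
        exact Or.inr ((rVmk x z).2 (htr _ _ _ ((rVmk x y).1 h12) ((rVmk y z).1 h23)))
      antisymm := by
        intro q1 q2 h12 h21
        rcases h12 with rfl | h12
        · rfl
        rcases h21 with rfl | h21
        · rfl
        refine Quotient.inductionOn₂ q1 q2 (fun x y h12 h21 => ?_) h12 h21
        exact absurd (htr _ _ _ ((rVmk x y).1 h12) ((rVmk y x).1 h21)) (hirr x) }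
  obtain ⟨L, hL, hrL⟩ := extend_partialOrder r
  haveI := hL
  refine ⟨{p : X × X | L ⟦p.1⟧ ⟦p.2⟧}, ⟨⟨fun x => refl_of L _, fun x y z h1 h2 =>
    trans_of L h1 h2⟩, fun x y => total_of L _ _, ?_, ?_⟩, ?_⟩
  · intro p hp
    have hpV := hPV hp
    have h1 : L ⟦p.1⟧ ⟦p.2⟧ := hrL _ _ (Or.inr ((rVmk _ _).2 hpV))
    refine ⟨h1, fun h2 => ?_⟩
    have : (⟦p.1⟧ : Quotient s) = ⟦p.2⟧ := antisymm_of L h1 h2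
    have hs : (p.1, p.2) ∈ S := Quotient.exact this
    exact hirr p.1 (hSVS _ _ _ _ (hrefl p.1) hpV (hsymm _ _ hs))
  · ext ⟨x, y⟩
    constructor
    · rintro ⟨h1, h2⟩
      exact Quotient.exact (antisymm_of L h1 h2)
    · intro h
      have : (⟦x⟧ : Quotient s) = ⟦y⟧ := Quotient.sound h
      constructor
      · show L ⟦x⟧ ⟦y⟧
        rw [this]
        exact refl_of L _
      · show L ⟦y⟧ ⟦x⟧
        rw [this]
        exact refl_of L _
  · intro p hp
    have h1 : L ⟦p.1⟧ ⟦p.2⟧ := hrL _ _ (Or.inr ((rVmk _ _).2 hp))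
    refine ⟨h1, fun h2 => ?_⟩
    have : (⟦p.1⟧ : Quotient s) = ⟦p.2⟧ := antisymm_of L h1 h2
    have hs : (p.1, p.2) ∈ S := Quotient.exact this
    exact hirr p.1 (hSVS _ _ _ _ (hrefl p.1) hp (hsymm _ _ hs))

/-- Force a strict preference between an incomparable, non-equivalent pair. -/
lemma aux_two_orientations {pr S V : Set (X × X)} (hS : IsEquivRel S)
    (hirr : ∀ x, (x, x) ∉ V)
    (htr : ∀ x y z, (x, y) ∈ V → (y, z) ∈ V → (x, z) ∈ V)
    (hSVS : ∀ u x y v, (u, x) ∈ S → (x, y) ∈ V → (y, v) ∈ S → (u, v) ∈ V)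
    (hPV : asymPart pr ⊆ V) {a b : X}
    (hab : (a, b) ∉ V) (hba : (b, a) ∉ V) (habS : (a, b) ∉ S) :
    ∃ T, IsSExtension pr S T ∧ (a, b) ∈ asymPart T := by
  obtain ⟨hrefl, hsymm, htrs⟩ := hS
  set F : Set (X × X) :=
    {p | ((p.1, a) ∈ S ∨ (p.1, a) ∈ V) ∧ ((b, p.2) ∈ S ∨ (b, p.2) ∈ V)} with hF
  have hkey : ∀ y, ((b, y) ∈ S ∨ (b, y) ∈ V) → ((y, a) ∈ S ∨ (y, a) ∈ V) → False := by
    rintro y (h1 | h1) (h2 | h2)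
    · exact habS (hsymm _ _ (htrs _ _ _ h1 h2))
    · exact hba (hSVS _ _ _ _ h1 h2 (hrefl a))
    · exact hba (hSVS _ _ _ _ (hrefl b) h1 h2)
    · exact hba (htr _ _ _ h1 h2)
  have hirr' : ∀ x, (x, x) ∉ V ∪ F := by
    rintro x (h | ⟨h1, h2⟩)
    · exact hirr x h
    · exact hkey x h2 h1
  have htr' : ∀ x y z, (x, y) ∈ V ∪ F → (y, z) ∈ V ∪ F → (x, z) ∈ V ∪ F := by
    rintro x y z (h1 | ⟨ha1, hb1⟩) (h2 | ⟨ha2, hb2⟩)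
    · exact Or.inl (htr _ _ _ h1 h2)
    · refine Or.inr ⟨?_, hb2⟩
      rcases ha2 with h | h
      · exact Or.inr (hSVS _ _ _ _ (hrefl x) h1 h)
      · exact Or.inr (htr _ _ _ h1 h)
    · refine Or.inr ⟨ha1, ?_⟩
      rcases hb1 with h | h
      · exact Or.inr (hSVS _ _ _ _ h h2 (hrefl z))
      · exact Or.inr (htr _ _ _ h h2)
    · exact absurd (hkey y hb1 ha2) id
  have hSVS' : ∀ u x y v, (u, x) ∈ S → (x, y) ∈ V ∪ F → (y, v) ∈ S → (u, v) ∈ V ∪ F := by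
    rintro u x y v hs1 (h | ⟨ha1, hb1⟩) hs2
    · exact Or.inl (hSVS _ _ _ _ hs1 h hs2)
    · refine Or.inr ⟨?_, ?_⟩
      · rcases ha1 with h | h
        · exact Or.inl (htrs _ _ _ hs1 h)
        · exact Or.inr (hSVS _ _ _ _ hs1 h (hrefl a))
      · rcases hb1 with h | h
        · exact Or.inl (htrs _ _ _ h hs2)
        · exact Or.inr (hSVS _ _ _ _ (hrefl b) h hs2)
  have hPV' : asymPart pr ⊆ V ∪ F := fun p hp => Or.inl (hPV hp)
  obtain ⟨T, hT, hsub⟩ :=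
    aux_exists_extension (pr := pr) ⟨hrefl, hsymm, htrs⟩ hirr' htr' hSVS' hPV'
  exact ⟨T, hT, hsub (Or.inr ⟨Or.inl (hrefl a), Or.inl (hrefl b)⟩)⟩

lemma aux_asym_trans {T : Set (X × X)} (hT : IsPreorderRel T) :
    ∀ x y z, (x, y) ∈ asymPart T → (y, z) ∈ asymPart T → (x, z) ∈ asymPart T := by
  rintro x y z ⟨h1, h2⟩ ⟨h3, h4⟩
  exact ⟨hT.2 _ _ _ h1 h3, fun h => h4 (hT.2 _ _ _ h h1)⟩

lemma aux_asym_irr {T : Set (X × X)} : ∀ x : X, (x, x) ∉ asymPart T :=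
  fun _ h => h.2 h.1

/-- For any `S`-extension `T`, the hull of `S ∘ P ∘ S` lies in the asymmetric part of `T`. -/
lemma aux_hull_subset {pr S T : Set (X × X)} (hS : IsEquivRel S)
    (hT : IsSExtension pr S T) :
    TransHull (relComp S (relComp (asymPart pr) S)) ⊆ asymPart T := by
  obtain ⟨hpre, htot, hasym, hsympart⟩ := hT
  have hST : ∀ x y : X, (x, y) ∈ S → (x, y) ∈ T ∧ (y, x) ∈ T := by
    intro x y h
    rw [← hsympart] at h
    exact ⟨h.1, h.2⟩
  have hQ : relComp S (relComp (asymPart pr) S) ⊆ asymPart T := by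
    rintro ⟨x, y⟩ ⟨u, hxu, v, huv, hvy⟩
    have huvT := hasym huv
    refine ⟨hpre.2 _ _ _ (hST _ _ hxu).1 (hpre.2 _ _ _ huvT.1 (hST _ _ hvy).1), fun h => ?_⟩
    exact huvT.2 (hpre.2 _ _ _ (hST _ _ hvy).1 (hpre.2 _ _ _ h (hST _ _ hxu).1))
  have key : ∀ a b : X,
      Relation.TransGen (fun u v => (u, v) ∈ relComp S (relComp (asymPart pr) S)) a b →
      (a, b) ∈ asymPart T := by
    intro a b h
    induction h with
    | single h' => exact hQ h'
    | tail _ h' ih => exact aux_asym_trans ⟨hpre.1, hpre.2⟩ _ _ _ ih (hQ h')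
  intro p hp
  exact key p.1 p.2 hp

end Aux
theorem unique_S_extension_iff [Nonempty X] (pr S : Set (X × X))
    (hpr : IsPartialOrderRel pr) (hS : IsEquivRel S) :
    (∃! T : Set (X × X), IsSExtension pr S T) ↔
      (S ∈ SigmaStar pr ∧ (∀ S' ∈ SigmaStar pr, S ⊆ S' → S' = S) ∧
        IsNegTransRel (TransHull (relComp S (relComp (asymPart pr) S)))) := by
  obtain ⟨hrefl, hsymm, htrs⟩ := id hS
  set P := asymPart pr with hPdef
  set Q := relComp S (relComp P S) with hQdef
  set W := TransHull Q with hWdef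
  have hWtrans : ∀ x y z : X, (x, y) ∈ W → (y, z) ∈ W → (x, z) ∈ W :=
    fun x y z h1 h2 => Relation.TransGen.trans h1 h2
  have hQW : Q ⊆ W := fun p hp => Relation.TransGen.single hp
  have hPQ : P ⊆ Q := fun p hp => ⟨p.1, hrefl p.1, p.2, hp, hrefl p.2⟩
  have hPW : P ⊆ W := fun p hp => hQW (hPQ hp)
  have hSQ : ∀ x y z : X, (x, y) ∈ S → (y, z) ∈ Q → (x, z) ∈ Q := by
    rintro x y z hxy ⟨u, h1, v, h2, h3⟩
    exact ⟨u, htrs _ _ _ hxy h1, v, h2, h3⟩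
  have hQS : ∀ x y z : X, (x, y) ∈ Q → (y, z) ∈ S → (x, z) ∈ Q := by
    rintro x y z ⟨u, h1, v, h2, h3⟩ hyz
    exact ⟨u, h1, v, h2, htrs _ _ _ h3 hyz⟩
  have hSW : ∀ x y z : X, (x, y) ∈ S → (y, z) ∈ W → (x, z) ∈ W := by
    intro x y z hxy h
    have h' : Relation.TransGen (fun u v => (u, v) ∈ Q) y z := h
    induction h' with
    | @single c h' => exact Relation.TransGen.single (hSQ _ _ _ hxy h')
    | @tail m c h1 h2 ih => exact Relation.TransGen.tail (ih h1) h2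
  have hWS : ∀ x y z : X, (x, y) ∈ W → (y, z) ∈ S → (x, z) ∈ W := by
    intro x y z h hyz
    have h' : Relation.TransGen (fun u v => (u, v) ∈ Q) x y := h
    obtain ⟨m, h1, h2⟩ := Relation.TransGen.tail'_iff.mp h'
    exact Relation.TransGen.tail' h1 (hQS _ _ _ h2 hyz)
  have hSWS : ∀ u x y v : X, (u, x) ∈ S → (x, y) ∈ W → (y, v) ∈ S → (u, v) ∈ W :=
    fun u x y v h1 h2 h3 => hWS _ _ _ (hSW _ _ _ h1 h2) h3
  constructor
  · -- forward
    rintro ⟨T, hT, huniq⟩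
    have hWT : W ⊆ asymPart T := aux_hull_subset hS hT
    have hQT : Q ⊆ asymPart T := fun p hp => hWT (hQW hp)
    have hPTtrans := aux_asym_trans ⟨hT.1.1, hT.1.2⟩
    have hQac : IsAcyclicRel Q := aux_acyclic_of_subset aux_asym_irr hPTtrans hQT
    have hWirr : ∀ x : X, (x, x) ∉ W := aux_transGen_irrefl hQac
    have contra : ∀ a b : X, (a, b) ∉ S →
        (∀ T₁, IsSExtension pr S T₁ → (a, b) ∈ asymPart T₁ → False) ∨
        (∀ T₂, IsSExtension pr S T₂ → (b, a) ∈ asymPart T₂ → False) → True := fun _ _ _ _ => trivial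
    have key2 : ∀ (V : Set (X × X)), (∀ x, (x, x) ∉ V) →
        (∀ x y z, (x, y) ∈ V → (y, z) ∈ V → (x, z) ∈ V) →
        (∀ u x y v, (u, x) ∈ S → (x, y) ∈ V → (y, v) ∈ S → (u, v) ∈ V) →
        asymPart pr ⊆ V → ∀ a b : X, (a, b) ∉ V → (b, a) ∉ V → (a, b) ∉ S → False := by
      intro V hirr htr hsvs hpv a b h1 h2 h3
      obtain ⟨T₁, hT₁, hab₁⟩ := aux_two_orientations hS hirr htr hsvs hpv h1 h2 h3
      obtain ⟨T₂, hT₂, hab₂⟩ := aux_two_orientations hS hirr htr hsvs hpv h2 h1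
        (fun h => h3 (hsymm _ _ h))
      have e1 : T₁ = T := huniq T₁ hT₁
      have e2 : T₂ = T := huniq T₂ hT₂
      rw [e1] at hab₁
      rw [e2] at hab₂
      exact hab₂.2 hab₁.1
    refine ⟨⟨hS, hQac⟩, ?_, ?_⟩
    · -- maximality
      intro S' hS' hSS'
      by_contra hne
      have hnsub : ¬ S' ⊆ S := fun h => hne (Set.Subset.antisymm h hSS')
      obtain ⟨⟨a, b⟩, hab', habS⟩ := Set.not_subset.mp hnsub
      obtain ⟨⟨hrefl', hsymm', htrs'⟩, hQ'ac⟩ := hS'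
      set Q' := relComp S' (relComp P S') with hQ'def
      set W' := TransHull Q' with hW'def
      have hW'trans : ∀ x y z : X, (x, y) ∈ W' → (y, z) ∈ W' → (x, z) ∈ W' :=
        fun x y z h1 h2 => Relation.TransGen.trans h1 h2
      have hQ'W' : Q' ⊆ W' := fun p hp => Relation.TransGen.single hp
      have hW'irr : ∀ x : X, (x, x) ∉ W' := aux_transGen_irrefl hQ'ac
      have hS'Q' : ∀ x y z : X, (x, y) ∈ S' → (y, z) ∈ Q' → (x, z) ∈ Q' := by
        rintro x y z hxy ⟨u, h1, v, h2, h3⟩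
        exact ⟨u, htrs' _ _ _ hxy h1, v, h2, h3⟩
      have hQ'S' : ∀ x y z : X, (x, y) ∈ Q' → (y, z) ∈ S' → (x, z) ∈ Q' := by
        rintro x y z ⟨u, h1, v, h2, h3⟩ hyz
        exact ⟨u, h1, v, h2, htrs' _ _ _ h3 hyz⟩
      have hS'W' : ∀ x y z : X, (x, y) ∈ S' → (y, z) ∈ W' → (x, z) ∈ W' := by
        intro x y z hxy h
        have h' : Relation.TransGen (fun u v => (u, v) ∈ Q') y z := h
        induction h' with
        | @single c h' => exact Relation.TransGen.single (hS'Q' _ _ _ hxy h')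
        | @tail m c h1 h2 ih => exact Relation.TransGen.tail (ih h1) h2
      have hW'S' : ∀ x y z : X, (x, y) ∈ W' → (y, z) ∈ S' → (x, z) ∈ W' := by
        intro x y z h hyz
        obtain ⟨m, h1, h2⟩ := Relation.TransGen.tail'_iff.mp h
        exact Relation.TransGen.tail' h1 (hQ'S' _ _ _ h2 hyz)
      have hSW'S : ∀ u x y v : X, (u, x) ∈ S → (x, y) ∈ W' → (y, v) ∈ S → (u, v) ∈ W' :=
        fun u x y v h1 h2 h3 => hW'S' _ _ _ (hS'W' _ _ _ (hSS' h1) h2) (hSS' h3)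
      have hPW' : asymPart pr ⊆ W' :=
        fun p hp => hQ'W' ⟨p.1, hrefl' p.1, p.2, hp, hrefl' p.2⟩
      have h1 : (a, b) ∉ W' := fun h => hW'irr a (hW'S' _ _ _ h (hsymm' _ _ hab'))
      have h2 : (b, a) ∉ W' := fun h => hW'irr b (hW'S' _ _ _ h hab')
      exact key2 W' hW'irr hW'trans hSW'S hPW' a b h1 h2 habS
    · -- negative transitivity
      intro x y z hxy hyz hxz
      have h1 : (y, x) ∉ W := fun h => hyz (hWtrans _ _ _ h hxz)
      have h2 : (x, y) ∉ S := fun h => hyz (hSW _ _ _ (hsymm _ _ h) hxz)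
      exact key2 W hWirr hWtrans hSWS hPW x y hxy h1 h2
  · -- backward
    rintro ⟨⟨_, hQac⟩, hmax, hneg⟩
    have hWirr : ∀ x : X, (x, x) ∉ W := aux_transGen_irrefl hQac
    set I : Set (X × X) := {p | (p.1, p.2) ∉ W ∧ (p.2, p.1) ∉ W} with hIdef
    have hIW : ∀ u x y v : X, (u, x) ∈ I → (x, y) ∈ W → (y, v) ∈ I → (u, v) ∈ W := by
      intro u x y v hu hxy hv
      by_contra huv
      exact absurd hxy (hneg x u y hu.2 (hneg u v y huv hv.2))
    have hSI : S ⊆ I := by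
      rintro ⟨x, y⟩ hxy
      exact ⟨fun h => hWirr x (hWS _ _ _ h (hsymm _ _ hxy)),
        fun h => hWirr y (hWS _ _ _ h hxy)⟩
    have hIequiv : IsEquivRel I := by
      refine ⟨fun x => ⟨hWirr x, hWirr x⟩, fun x y h => ⟨h.2, h.1⟩, ?_⟩
      intro x y z h1 h2
      exact ⟨hneg x y z h1.1 h2.1, hneg z y x h2.2 h1.2⟩
    have hIstar : I ∈ SigmaStar pr := by
      refine ⟨hIequiv, aux_acyclic_of_subset hWirr hWtrans ?_⟩
      rintro ⟨x, y⟩ ⟨u, h1, v, h2, h3⟩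
      exact hIW _ _ _ _ h1 (hQW (hPQ h2)) h3
    have hIS : I = S := hmax I hIstar hSI
    set T₀ : Set (X × X) := S ∪ W with hT₀def
    have hT₀ext : IsSExtension pr S T₀ := by
      refine ⟨⟨fun x => Or.inl (hrefl x), ?_⟩, ?_, ?_, ?_⟩
      · rintro x y z (h1 | h1) (h2 | h2)
        · exact Or.inl (htrs _ _ _ h1 h2)
        · exact Or.inr (hSW _ _ _ h1 h2)
        · exact Or.inr (hWS _ _ _ h1 h2)
        · exact Or.inr (hWtrans _ _ _ h1 h2)
      · intro x y
        by_contra h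
        push_neg at h
        have hxyI : (x, y) ∈ I :=
          ⟨fun hw => h.1 (Or.inr hw), fun hw => h.2 (Or.inr hw)⟩
        rw [hIS] at hxyI
        exact h.1 (Or.inl hxyI)
      · rintro ⟨x, y⟩ hp
        have hw : (x, y) ∈ W := hPW hp
        refine ⟨Or.inr hw, ?_⟩
        rintro (h | h)
        · exact hWirr x (hWS _ _ _ hw h)
        · exact hWirr x (hWtrans _ _ _ hw h)
      · ext ⟨x, y⟩
        constructor
        · rintro ⟨h1 | h1, h2 | h2⟩
          · exact h1
          · exact absurd (hSW _ _ _ h1 h2) (hWirr x)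
          · exact absurd (hWS _ _ _ h1 h2) (hWirr x)
          · exact absurd (hWtrans _ _ _ h1 h2) (hWirr x)
        · intro h
          exact ⟨Or.inl h, Or.inl (hsymm _ _ h)⟩
    refine ⟨T₀, hT₀ext, ?_⟩
    intro T' hT'
    have hWT' : W ⊆ asymPart T' := aux_hull_subset hS hT'
    have hsymT' : symPart T' = S := hT'.2.2.2
    ext ⟨x, y⟩
    constructor
    · intro hxy
      by_cases hyx : (y, x) ∈ T'
      · left
        rw [← hsymT']
        exact ⟨hxy, hyx⟩
      · right
        by_contra hnW
        have hyxW : (y, x) ∉ W := fun h => (hWT' h).2 hxy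
        have : (x, y) ∈ I := ⟨hnW, hyxW⟩
        rw [hIS, ← hsymT'] at this
        exact hyx this.2
    · rintro (h | h)
      · rw [← hsymT'] at h
        exact h.1
      · exact (hWT' h).1
end

section
/- Let ≼ be a partial order on a nonempty set X with asymmetric part P_≼ and S an equivalence relation on X. The relation S ∪ (S ∘ P_≼ ∘ S) is the unique total preorder S-extension of ≼ if and only if S belongs to the collection Σ*(≼) and S is maximal with respect to inclusion in the collection Σ(≼). -/
variable {X : Type*}

private lemma chain_fold {X : Type*} {G : Set (X × X)}
    (htr : ∀ a b c, (a, b) ∈ G → (b, c) ∈ G → (a, c) ∈ G) :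
    ∀ (n : ℕ) (x : Fin (n + 2) → X),
      (∀ i : Fin (n + 1), (x i.castSucc, x i.succ) ∈ G) →
      (x 0, x (Fin.last (n + 1))) ∈ G := by
  intro n
  induction n with
  | zero =>
    intro x h
    simpa using h 0
  | succ m ih =>
    intro x h
    have h1 := ih (fun i => x i.castSucc) (fun i => by
      have hi := h i.castSucc; rw [Fin.succ_castSucc] at hi; exact hi)
    have h2 := h (Fin.last (m + 1))
    rw [Fin.succ_last] at h2
    simpa using htr _ _ _ (by simpa using h1) h2

private lemma acyclic_of_sub {X : Type*} {G A : Set (X × X)}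
    (hsub : G ⊆ A)
    (htr : ∀ a b c, (a, b) ∈ A → (b, c) ∈ A → (a, c) ∈ A)
    (hirr : ∀ a, (a, a) ∉ A) : IsAcyclicRel G := by
  intro n x hch hlast
  cases n with
  | zero => exact hirr (x 0) (hsub (by simpa using hlast))
  | succ m =>
    have h1 : (x 0, x (Fin.last (m + 1))) ∈ A :=
      chain_fold htr m x (fun i => hsub (hch i))
    exact hirr (x 0) (htr _ _ _ h1 (hsub hlast))

private lemma total_of_maximal {X : Type*} {S P : Set (X × X)}
    (hSrefl : ∀ x, (x, x) ∈ S) (hSsymm : ∀ x y, (x, y) ∈ S → (y, x) ∈ S)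
    (hStrans : ∀ x y z, (x, y) ∈ S → (y, z) ∈ S → (x, z) ∈ S)
    (hirr : ∀ x, (x, x) ∉ relComp S (relComp P S))
    (hmax : ∀ S', IsEquivRel S' → (∀ z, (z, z) ∉ relComp S' (relComp P S')) →
      S ⊆ S' → S' = S)
    (x y : X) :
    (x, y) ∈ S ∨ (x, y) ∈ relComp S (relComp P S) ∨
      (y, x) ∈ relComp S (relComp P S) := by
  by_contra hcon
  push_neg at hcon
  obtain ⟨hxyS, hxyQ, hyxQ⟩ := hcon
  set S' : Set (X × X) :=
    S ∪ {p | (p.1, x) ∈ S ∧ (y, p.2) ∈ S} ∪ {p | (p.1, y) ∈ S ∧ (x, p.2) ∈ S}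
    with hS'def
  have hsub : S ⊆ S' := fun p hp => Or.inl (Or.inl hp)
  have hS'equiv : IsEquivRel S' := by
    refine ⟨fun z => Or.inl (Or.inl (hSrefl z)), ?_, ?_⟩
    · rintro a b ((h | ⟨h1, h2⟩) | ⟨h1, h2⟩)
      · exact Or.inl (Or.inl (hSsymm a b h))
      · exact Or.inr ⟨hSsymm y b h2, hSsymm a x h1⟩
      · exact Or.inl (Or.inr ⟨hSsymm x b h2, hSsymm a y h1⟩)
    · rintro a b c ((hab | ⟨h1, h2⟩) | ⟨h1, h2⟩) ((hbc | ⟨g1, g2⟩) | ⟨g1, g2⟩)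
      · exact Or.inl (Or.inl (hStrans a b c hab hbc))
      · exact Or.inl (Or.inr ⟨hStrans a b x hab g1, g2⟩)
      · exact Or.inr ⟨hStrans a b y hab g1, g2⟩
      · exact Or.inl (Or.inr ⟨h1, hStrans y b c h2 hbc⟩)
      · exact absurd (hSsymm y x (hStrans y b x h2 g1)) hxyS
      · exact Or.inl (Or.inl (hStrans a x c h1 g2))
      · exact Or.inr ⟨h1, hStrans x b c h2 hbc⟩
      · exact Or.inl (Or.inl (hStrans a y c h1 g2))
      · exact absurd (hStrans x b y h2 g1) hxyS
  have hS'irr : ∀ z, (z, z) ∉ relComp S' (relComp P S') := by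
    rintro z ⟨c, hzc, d, hcd, hdz⟩
    rcases hzc with (hzc | ⟨h1, h2⟩) | ⟨h1, h2⟩ <;>
      rcases hdz with (hdz | ⟨g1, g2⟩) | ⟨g1, g2⟩
    · exact hirr z ⟨c, hzc, d, hcd, hdz⟩
    · exact hyxQ ⟨c, hStrans y z c g2 hzc, d, hcd, g1⟩
    · exact hxyQ ⟨c, hStrans x z c g2 hzc, d, hcd, g1⟩
    · exact hyxQ ⟨c, h2, d, hcd, hStrans d z x hdz h1⟩
    · exact hyxQ ⟨c, h2, d, hcd, g1⟩
    · exact hirr y ⟨c, h2, d, hcd, g1⟩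
    · exact hxyQ ⟨c, h2, d, hcd, hStrans d z y hdz h1⟩
    · exact hirr x ⟨c, h2, d, hcd, g1⟩
    · exact hxyQ ⟨c, h2, d, hcd, g1⟩
  have hxyS' : (x, y) ∈ S' := Or.inl (Or.inr ⟨hSrefl x, hSrefl y⟩)
  rw [hmax S' hS'equiv hS'irr hsub] at hxyS'
  exact hxyS hxyS'

theorem union_comp_unique_S_extension_iff [Nonempty X] (pr S : Set (X × X))
    (hpr : IsPartialOrderRel pr) (hS : IsEquivRel S) :
    (IsSExtension pr S (S ∪ relComp S (relComp (asymPart pr) S)) ∧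
      ∀ T : Set (X × X), IsSExtension pr S T →
        T = S ∪ relComp S (relComp (asymPart pr) S)) ↔
      (S ∈ SigmaStar pr ∧ S ∈ SigmaCol pr ∧
        ∀ S' ∈ SigmaCol pr, S ⊆ S' → S' = S) := by
  obtain ⟨hSrefl, hSsymm, hStrans⟩ := hS
  constructor
  · rintro ⟨⟨⟨hUrefl, hUtrans⟩, hUtot, hUP, hUsym⟩, -⟩
    have hirr : ∀ z : X, (z, z) ∉ relComp S (relComp (asymPart pr) S) := by
      rintro z ⟨a, hza, b, hab, hbz⟩
      exact (hUP hab).2 (hUtrans b z a (Or.inl hbz) (Or.inl hza))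
    have hQA : relComp S (relComp (asymPart pr) S) ⊆
        asymPart (S ∪ relComp S (relComp (asymPart pr) S)) := by
      rintro ⟨u, v⟩ ⟨a, hua, b, hab, hbv⟩
      refine ⟨Or.inr ⟨a, hua, b, hab, hbv⟩, ?_⟩
      rintro (hvu | ⟨c, hvc, d, hcd, hdu⟩)
      · exact hirr a ⟨a, hSrefl a, b, hab, hStrans b u a (hStrans b v u hbv hvu) hua⟩
      · exact (hUP hcd).2 (hUtrans d v c
          (hUtrans d u v (Or.inl hdu) (Or.inr ⟨a, hua, b, hab, hbv⟩)) (Or.inl hvc))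
    have hAtr : ∀ a b c : X,
        (a, b) ∈ asymPart (S ∪ relComp S (relComp (asymPart pr) S)) →
        (b, c) ∈ asymPart (S ∪ relComp S (relComp (asymPart pr) S)) →
        (a, c) ∈ asymPart (S ∪ relComp S (relComp (asymPart pr) S)) := by
      rintro a b c ⟨hab, hba⟩ ⟨hbc, hcb⟩
      exact ⟨hUtrans a b c hab hbc, fun hca => hba (hUtrans b c a hbc hca)⟩
    have hAirr : ∀ a : X,
        (a, a) ∉ asymPart (S ∪ relComp S (relComp (asymPart pr) S)) :=
      fun a h => h.2 h.1
    refine ⟨⟨⟨hSrefl, hSsymm, hStrans⟩, acyclic_of_sub hQA hAtr hAirr⟩,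
      ⟨⟨hSrefl, hSsymm, hStrans⟩, hirr⟩, ?_⟩
    rintro S' ⟨⟨hS'refl, hS'symm, hS'trans⟩, hS'irr⟩ hsub
    refine Set.Subset.antisymm ?_ hsub
    rintro ⟨u, v⟩ huv
    by_contra huvS
    rcases hUtot u v with h | h
    · rcases h with h | ⟨a, hua, b, hab, hbv⟩
      · exact huvS h
      · exact hS'irr a ⟨a, hS'refl a, b, hab,
          hS'trans b u a (hS'trans b v u (hsub hbv) (hS'symm u v huv)) (hsub hua)⟩
    · rcases h with h | ⟨a, hva, b, hab, hbu⟩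
      · exact huvS (hSsymm v u h)
      · exact hS'irr a ⟨a, hS'refl a, b, hab,
          hS'trans b v a (hS'trans b u v (hsub hbu) huv) (hsub hva)⟩
  · rintro ⟨⟨-, hacy⟩, ⟨-, hirr⟩, hmax⟩
    have hTot := total_of_maximal hSrefl hSsymm hStrans hirr
      (fun S' h1 h2 h3 => hmax S' ⟨h1, h2⟩ h3)
    have hQ2 : ∀ a b : X, (a, b) ∈ relComp S (relComp (asymPart pr) S) →
        (b, a) ∈ relComp S (relComp (asymPart pr) S) → False := by
      intro a b hab hba
      exact hacy 1 ![a, b] (fun i => by fin_cases i; simpa using hab) (by simpa using hba)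
    have hQ3 : ∀ a b c : X, (a, b) ∈ relComp S (relComp (asymPart pr) S) →
        (b, c) ∈ relComp S (relComp (asymPart pr) S) →
        (c, a) ∈ relComp S (relComp (asymPart pr) S) → False := by
      intro a b c hab hbc hca
      refine hacy 2 ![a, b, c] (fun i => ?_) (by simpa using hca)
      fin_cases i
      · simpa using hab
      · simpa using hbc
    have hUtrans : ∀ a b c : X,
        (a, b) ∈ S ∪ relComp S (relComp (asymPart pr) S) →
        (b, c) ∈ S ∪ relComp S (relComp (asymPart pr) S) →
        (a, c) ∈ S ∪ relComp S (relComp (asymPart pr) S) := by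
      rintro a b c (hab | ⟨u, hau, v, huv, hvb⟩) (hbc | ⟨p, hbp, q, hpq, hqc⟩)
      · exact Or.inl (hStrans a b c hab hbc)
      · exact Or.inr ⟨p, hStrans a b p hab hbp, q, hpq, hqc⟩
      · exact Or.inr ⟨u, hau, v, huv, hStrans v b c hvb hbc⟩
      · rcases hTot a c with h | h | h
        · exact Or.inl h
        · exact Or.inr h
        · exact absurd h (fun h => hQ3 a b c ⟨u, hau, v, huv, hvb⟩ ⟨p, hbp, q, hpq, hqc⟩ h)
    constructor
    · refine ⟨?_, ?_, ?_, ?_⟩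
      · exact ⟨fun z => Or.inl (hSrefl z), hUtrans⟩
      · intro a b
        rcases hTot a b with h | h | h
        · exact Or.inl (Or.inl h)
        · exact Or.inl (Or.inr h)
        · exact Or.inr (Or.inr h)
      · rintro ⟨a, b⟩ hab
        refine ⟨Or.inr ⟨a, hSrefl a, b, hab, hSrefl b⟩, ?_⟩
        rintro (hba | hba)
        · exact hirr a ⟨a, hSrefl a, b, hab, hba⟩
        · exact hQ2 a b ⟨a, hSrefl a, b, hab, hSrefl b⟩ hba
      · ext ⟨a, b⟩
        constructor
        · rintro ⟨hab | ⟨u, hau, v, huv, hvb⟩, hba | hba⟩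
          · exact hab
          · rcases hba with ⟨p, hbp, q, hpq, hqa⟩
            exact absurd (⟨p, hbp, q, hpq, hStrans q a b hqa hab⟩ :
              (b, b) ∈ relComp S (relComp (asymPart pr) S)) (hirr b)
          · exact absurd (⟨u, hau, v, huv, hStrans v b a hvb hba⟩ :
              (a, a) ∈ relComp S (relComp (asymPart pr) S)) (hirr a)
          · exact absurd hba (fun hba => hQ2 a b ⟨u, hau, v, huv, hvb⟩ hba)
        · intro hab
          exact ⟨Or.inl hab, Or.inl (hSsymm a b hab)⟩
    · rintro T ⟨⟨hTrefl, hTtrans⟩, hTtot, hTP, hTsym⟩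
      have hST : S ⊆ T := by
        intro p hp
        rw [← hTsym] at hp
        exact hp.1
      apply Set.Subset.antisymm
      · rintro ⟨a, b⟩ hab
        rcases hTot a b with h | h | h
        · exact Or.inl h
        · exact Or.inr h
        · rcases h with ⟨u, hbu, v, huv, hva⟩
          exact absurd (hTtrans v b u (hTtrans v a b (hST hva) hab) (hST hbu)) (hTP huv).2
      · rintro ⟨a, b⟩ (hab | ⟨u, hau, v, huv, hvb⟩)
        · exact hST hab
        · exact hTtrans a v b (hTtrans a u v (hST hau) (hTP huv).1) (hST hvb)
end

section
/- For a preorder ≾ on a nonempty set X, the equipotency relation R_≾ equals the indifference relation I_≾ if and only if the asymmetric part P_≾ is negatively transitive (equivalently, if and only if I_≾ is transitive). -/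
variable {X : Type*}

theorem equipot_eq_indiff_iff [Nonempty X] (pre : Set (X × X))
    (hpre : IsPreorderRel pre) :
    (equipot pre = indiff pre ↔ IsNegTransRel (asymPart pre)) ∧
    (equipot pre = indiff pre ↔
      ∀ x y z : X, (x, y) ∈ indiff pre → (y, z) ∈ indiff pre →
        (x, z) ∈ indiff pre) := by

  obtain ⟨hrefl, htrans⟩ := hpre
  have Isymm : ∀ x y : X, (x, y) ∈ indiff pre → (y, x) ∈ indiff pre :=
    fun x y h => ⟨h.2, h.1⟩
  have Irefl : ∀ x : X, (x, x) ∈ indiff pre :=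
    fun x => ⟨fun h => h.2 (hrefl x), fun h => h.2 (hrefl x)⟩
  have RsubI : equipot pre ⊆ indiff pre := by
    rintro ⟨x, y⟩ h
    have hx : (x, x) ∈ indiff pre := Irefl x
    have : (y, x) ∈ indiff pre := by
      have := Set.ext_iff.mp h x
      exact this.mp hx
    exact Isymm _ _ this
  have key : IsNegTransRel (asymPart pre) ↔
      (∀ x y z : X, (x, y) ∈ indiff pre → (y, z) ∈ indiff pre → (x, z) ∈ indiff pre) := by
    constructor
    · intro hn x y z hxy hyz
      exact ⟨hn _ _ _ hxy.1 hyz.1, hn _ _ _ hyz.2 hxy.2⟩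
    · intro hI x y z hxy hyz hxz
      obtain ⟨hxz1, hxz2⟩ := hxz
      by_cases hyx : (y, x) ∈ pre
      · exact hyz ⟨htrans y x z hyx hxz1, fun hzy => hxz2 (htrans z y x hzy hyx)⟩
      · by_cases hzy : (z, y) ∈ pre
        · exact hxy ⟨htrans x z y hxz1 hzy, fun hyx' => hxz2 (htrans z y x hzy hyx')⟩
        · have h1 : (x, y) ∈ indiff pre := ⟨hxy, fun h => hyx h.1⟩
          have h2 : (y, z) ∈ indiff pre := ⟨hyz, fun h => hzy h.1⟩
          exact (hI x y z h1 h2).1 ⟨hxz1, hxz2⟩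
  have main : equipot pre = indiff pre ↔
      (∀ x y z : X, (x, y) ∈ indiff pre → (y, z) ∈ indiff pre → (x, z) ∈ indiff pre) := by
    constructor
    · intro h x y z hxy hyz
      rw [← h] at hxy hyz ⊢
      exact hxy.trans hyz
    · intro hI
      apply Set.Subset.antisymm RsubI
      rintro ⟨x, y⟩ hxy
      show {z | (x, z) ∈ indiff pre} = {z | (y, z) ∈ indiff pre}
      ext z
      constructor
      · intro hxz
        exact hI y x z (Isymm _ _ hxy) hxz
      · intro hyz
        exact hI x y z hxy hyz
  exact ⟨main.trans key.symm, main⟩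
end

section
/- Let ≼ be a partial order on a nonempty set X with asymmetric part P_≼ and S an equivalence relation on X such that P_≼ ∘ S = S ∘ P_≼ = P_≼. Then the union ≼ ∪ S is a preorder on X whose symmetric part coincides with S. -/
variable {X : Type*}

theorem union_isPreorder_and_symPart_eq [Nonempty X] (pr S : Set (X × X))
    (hpr : IsPartialOrderRel pr) (hS : IsEquivRel S)
    (h1 : relComp (asymPart pr) S = asymPart pr)
    (h2 : relComp S (asymPart pr) = asymPart pr) :
    IsPreorderRel (pr ∪ S) ∧ symPart (pr ∪ S) = S := by
  obtain ⟨⟨hrefl, htrans⟩, hanti⟩ := hpr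
  obtain ⟨hSr, hSs, hSt⟩ := hS
  -- key: (x,y) ∈ pr → (x,y) ∈ asymPart pr ∨ x = y
  have key : ∀ x y, (x, y) ∈ pr → (x, y) ∈ asymPart pr ∨ x = y := by
    intro x y hxy
    by_cases h : (y, x) ∈ pr
    · exact Or.inr (hanti x y hxy h)
    · exact Or.inl ⟨hxy, h⟩
  constructor
  · constructor
    · intro x; exact Or.inl (hrefl x)
    · intro x y z hxy hyz
      rcases hxy with hxy | hxy
      · rcases hyz with hyz | hyz
        · exact Or.inl (htrans x y z hxy hyz)
        · rcases key x y hxy with hP | rfl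
          · have : (x, z) ∈ relComp (asymPart pr) S := ⟨y, hP, hyz⟩
            rw [h1] at this
            exact Or.inl this.1
          · exact Or.inr hyz
      · rcases hyz with hyz | hyz
        · rcases key y z hyz with hP | rfl
          · have : (x, z) ∈ relComp S (asymPart pr) := ⟨y, hxy, hP⟩
            rw [h2] at this
            exact Or.inl this.1
          · exact Or.inr hxy
        · exact Or.inr (hSt x y z hxy hyz)
  · ext ⟨x, y⟩
    constructor
    · rintro ⟨hxy | hxy, hyx | hyx⟩
      · have := hanti x y hxy hyx; subst this; exact hSr x
      · rcases key x y hxy with hP | rfl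
        · have : (x, x) ∈ relComp (asymPart pr) S := ⟨y, hP, hyx⟩
          rw [h1] at this
          exact absurd (hrefl x) this.2
        · exact hSs _ _ hyx
      · rcases key y x hyx with hP | rfl
        · have : (y, y) ∈ relComp (asymPart pr) S := ⟨x, hP, hxy⟩
          rw [h1] at this
          exact absurd (hrefl y) this.2
        · exact hxy
      · exact hxy
    · intro h
      exact ⟨Or.inr h, Or.inr (hSs x y h)⟩
end

section
/- Let ≼ be a partial order on a nonempty set X with asymmetric part P_≼ and let S be an equivalence relation on X that belongs to Σ*(≼) and is maximal with respect to inclusion in Σ(≼). Then for any x,y ∈ X exactly one of the following three alternatives holds: (x,y) ∈ S, or (x,y) ∈ S ∘ P_≼ ∘ S, or (y,x) ∈ S ∘ P_≼ ∘ S. -/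
variable {X : Type*}

theorem trichotomy_of_maximal [Nonempty X] (pr S : Set (X × X))
    (hpr : IsPartialOrderRel pr)
    (hstar : S ∈ SigmaStar pr) (hmem : S ∈ SigmaCol pr)
    (hmax : ∀ S' ∈ SigmaCol pr, S ⊆ S' → S' = S) (x y : X) :
    ((x, y) ∈ S ∧ (x, y) ∉ relComp S (relComp (asymPart pr) S) ∧ (y, x) ∉ relComp S (relComp (asymPart pr) S)) ∨
    ((x, y) ∉ S ∧ (x, y) ∈ relComp S (relComp (asymPart pr) S) ∧ (y, x) ∉ relComp S (relComp (asymPart pr) S)) ∨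
    ((x, y) ∉ S ∧ (x, y) ∉ relComp S (relComp (asymPart pr) S) ∧ (y, x) ∈ relComp S (relComp (asymPart pr) S)) := by
  obtain ⟨⟨hrefl, hsymm, htrans⟩, hirr⟩ := hmem
  set P := asymPart pr with hP
  set Q := relComp S (relComp P S) with hQdef
  -- S and Q are mutually exclusive
  have exSQ : ∀ a b : X, (a, b) ∈ S → (a, b) ∉ Q := by
    intro a b hab ⟨z, haz, w, hzw, hwb⟩
    exact hirr b ⟨z, htrans _ _ _ (hsymm _ _ hab) haz, w, hzw, hwb⟩
  have exSQ' : ∀ a b : X, (a, b) ∈ S → (b, a) ∉ Q := fun a b hab =>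
    exSQ b a (hsymm _ _ hab)
  -- Q and Q⁻¹ are mutually exclusive (acyclicity with n = 1)
  have exQQ : ∀ a b : X, (a, b) ∈ Q → (b, a) ∉ Q := by
    intro a b hab hba
    have := hstar.2 1 ![a, b] ?_
    · simpa using this hba
    · intro i
      have : i = 0 := Subsingleton.elim _ _
      subst this
      simpa using hab
  by_cases hS : (x, y) ∈ S
  · exact Or.inl ⟨hS, exSQ _ _ hS, exSQ' _ _ hS⟩
  by_cases hQ1 : (x, y) ∈ Q
  · exact Or.inr (Or.inl ⟨hS, hQ1, exQQ _ _ hQ1⟩)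
  by_cases hQ2 : (y, x) ∈ Q
  · exact Or.inr (Or.inr ⟨hS, hQ1, hQ2⟩)
  exfalso
  have hnS' : (y, x) ∉ S := fun h => hS (hsymm _ _ h)
  -- build a larger member of SigmaCol
  set S' : Set (X × X) :=
    {p | (p.1, p.2) ∈ S ∨ ((p.1, x) ∈ S ∧ (y, p.2) ∈ S) ∨ ((p.1, y) ∈ S ∧ (x, p.2) ∈ S)}
    with hS'def
  have hsub : S ⊆ S' := fun p hp => Or.inl hp
  have hsymm' : ∀ a b : X, (a, b) ∈ S' → (b, a) ∈ S' := by
    rintro a b (h | ⟨h1, h2⟩ | ⟨h1, h2⟩)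
    · exact Or.inl (hsymm _ _ h)
    · exact Or.inr (Or.inr ⟨hsymm _ _ h2, hsymm _ _ h1⟩)
    · exact Or.inr (Or.inl ⟨hsymm _ _ h2, hsymm _ _ h1⟩)
  have htrans' : ∀ a b c : X, (a, b) ∈ S' → (b, c) ∈ S' → (a, c) ∈ S' := by
    rintro a b c (h | ⟨h1, h2⟩ | ⟨h1, h2⟩) (g | ⟨g1, g2⟩ | ⟨g1, g2⟩)
    · exact Or.inl (htrans _ _ _ h g)
    · exact Or.inr (Or.inl ⟨htrans _ _ _ h g1, g2⟩)
    · exact Or.inr (Or.inr ⟨htrans _ _ _ h g1, g2⟩)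
    · exact Or.inr (Or.inl ⟨h1, htrans _ _ _ h2 g⟩)
    · exact absurd (hsymm _ _ (htrans _ _ _ h2 g1)) hS
    · exact Or.inl (htrans _ _ _ h1 g2)
    · exact Or.inr (Or.inr ⟨h1, htrans _ _ _ h2 g⟩)
    · exact Or.inl (htrans _ _ _ h1 g2)
    · exact absurd (htrans _ _ _ h2 g1) hS
  have hmemS' : S' ∈ SigmaCol pr := by
    refine ⟨⟨fun a => Or.inl (hrefl a), hsymm', htrans'⟩, ?_⟩
    rintro a ⟨u, hau, v, huv, hva⟩
    have hvu : (v, u) ∈ S' := htrans' _ _ _ hva hau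
    rcases hvu with h | ⟨h1, h2⟩ | ⟨h1, h2⟩
    · exact hirr u ⟨u, hrefl u, v, huv, h⟩
    · exact hQ2 ⟨u, h2, v, huv, h1⟩
    · exact hQ1 ⟨u, h2, v, huv, h1⟩
  have := hmax S' hmemS' hsub
  apply hS
  have hxy : ((x, y) : X × X) ∈ S' := Or.inr (Or.inl ⟨hrefl x, hrefl y⟩)
  rwa [this] at hxy
end
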